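/- arXiv:2409.15522 — 2 statements merged into one kernel-verified Lean document; each statement's English description precedes it below -/
import Mathlib

section
/- Let G be a 2-edge-connected, non-regular finite graph (multiple edges allowed, no loops), let F be a weak 2-factor of G, let w ∈ V(G) and λ ∈ {0,1}. Call a tree in G good if its vertex set is a union of vertex sets of components of F. Suppose G has no good weakly even (w,λ)-tree. Then the component C₀ of F containing w is an even cycle; moreover, if (X₀,Y₀) is the (w,λ)-bipartition of C₀, then every vertex of Y₀ has degree Δ(G) in G and Y₀ is an independent set in G. -/
/-- A multigraph on vertex type `V` with edge type `E`: each edge is assigned an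
unordered pair of distinct endpoints (multiple edges allowed, no loops). -/
structure Multigraph (V : Type) (E : Type) where
  inc : E → Sym2 V
  loopless : ∀ e : E, ¬ (inc e).IsDiag

namespace Multigraph

variable {V E : Type}

/-- `u` and `v` are joined by an edge belonging to the edge set `S`. -/
def AdjOn (G : Multigraph V E) (S : Set E) (u v : V) : Prop :=
  ∃ e ∈ S, G.inc e = s(u, v)

/-- `v` is reachable from `u` using edges in `S`. -/
def ReachOn (G : Multigraph V E) (S : Set E) (u v : V) : Prop :=
  Relation.ReflTransGen (G.AdjOn S) u v

/-- `G` is connected. -/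
def Connected (G : Multigraph V E) : Prop :=
  Nonempty V ∧ ∀ u v : V, G.ReachOn Set.univ u v

/-- The degree of `v` in the spanning subgraph with edge set `S`. -/
noncomputable def degOn (G : Multigraph V E) (S : Set E) (v : V) : ℕ :=
  {e ∈ S | v ∈ G.inc e}.ncard

/-- The degree of `v` in `G`. -/
noncomputable def degree (G : Multigraph V E) (v : V) : ℕ :=
  G.degOn Set.univ v

/-- The maximum degree `Δ(G)`. -/
noncomputable def maxDegree (G : Multigraph V E) [Fintype V] : ℕ :=
  Finset.univ.sup G.degree

/-- `G` is regular. -/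
def IsRegular (G : Multigraph V E) : Prop :=
  ∃ r : ℕ, ∀ v : V, G.degree v = r

/-- The 2-colouring `c` is proper on the edge set `S`: the two endpoints of any
edge of `S` receive different colours. -/
def ProperOn (G : Multigraph V E) (S : Set E) (c : V → Bool) : Prop :=
  ∀ e ∈ S, ∀ u v : V, G.inc e = s(u, v) → c u ≠ c v

/-- `G` is bipartite. -/
def IsBipartite (G : Multigraph V E) : Prop :=
  ∃ c : V → Bool, G.ProperOn Set.univ c

/-- The sub-multigraph of `G` with vertex set `U` and edge set `S` is a tree:
`U` is nonempty, every edge of `S` joins vertices of `U`, any two vertices of `U`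
are joined by a walk using edges of `S`, and there are exactly `|U| - 1` edges
(which forces acyclicity, and in particular forbids parallel edges in `S`). -/
structure IsTree (G : Multigraph V E) (U : Set V) (S : Set E) : Prop where
  nonempty : U.Nonempty
  edges_in : ∀ e ∈ S, ∀ v : V, v ∈ G.inc e → v ∈ U
  conn : ∀ u ∈ U, ∀ v ∈ U, G.ReachOn S u v
  card_eq : S.ncard + 1 = U.ncard

/-- `v` is a leaf of the subgraph with edge set `S`. -/
def IsLeaf (G : Multigraph V E) (S : Set E) (v : V) : Prop :=
  G.degOn S v = 1

/-- `e` is a cutedge: after removing `e`, some pair of vertices is separated. -/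
def IsCutedge (G : Multigraph V E) (e : E) : Prop :=
  ∃ u v : V, ¬ G.ReachOn {e}ᶜ u v

/-- `G` is 2-edge-connected: connected and without cutedges. -/
def TwoEdgeConnected (G : Multigraph V E) : Prop :=
  G.Connected ∧ ∀ e : E, ¬ G.IsCutedge e

/-- The edge set `S` is a weak 2-factor of `G`: every vertex has degree at most
2 in `S` (equivalently, every component of the spanning subgraph is a path —
possibly a single vertex — or a cycle), and every vertex of degree less than 2
in `S` (i.e. every endvertex of a path component) has degree less than `Δ(G)`
in `G`. -/
def IsWeakTwoFactor (G : Multigraph V E) [Fintype V] (S : Set E) : Prop :=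
  ∀ v : V, G.degOn S v ≤ 2 ∧ (G.degOn S v < 2 → G.degree v < G.maxDegree)

end Multigraph

namespace Multigraph

variable {V E : Type}

lemma inc_ne (G : Multigraph V E) {e : E} {x y : V} (h : G.inc e = s(x,y)) : x ≠ y := by
  intro hxy; exact G.loopless e (by rw [h, hxy]; exact Sym2.mk_isDiag_iff.2 rfl)

lemma adjOn_symm (G : Multigraph V E) {S : Set E} {u v : V} (h : G.AdjOn S u v) :
    G.AdjOn S v u := by
  obtain ⟨e, he, hinc⟩ := h; exact ⟨e, he, by rw [hinc, Sym2.eq_swap]⟩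

lemma reachOn_symm (G : Multigraph V E) {S : Set E} {u v : V} (h : G.ReachOn S u v) :
    G.ReachOn S v u := by
  induction h with
  | refl => exact Relation.ReflTransGen.refl
  | tail _ hadj ih => exact Relation.ReflTransGen.head (G.adjOn_symm hadj) ih

lemma reachOn_mono (G : Multigraph V E) {S T : Set E} (hST : S ⊆ T) {u v : V}
    (h : G.ReachOn S u v) : G.ReachOn T u v := by
  induction h with
  | refl => exact Relation.ReflTransGen.refl
  | tail _ hadj ih => exact ih.tail (by obtain ⟨e, he, h2⟩ := hadj; exact ⟨e, hST he, h2⟩)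

/-- The set of edges of `S` incident with `v`. -/
def incSet (G : Multigraph V E) (S : Set E) (v : V) : Set E := {e ∈ S | v ∈ G.inc e}

lemma degOn_def (G : Multigraph V E) (S : Set E) (v : V) :
    G.degOn S v = (G.incSet S v).ncard := rfl

lemma reach_isolated (G : Multigraph V E) {S : Set E} {x a : V}
    (hx : ∀ e ∈ S, x ∉ G.inc e) (h : G.ReachOn S a x) : a = x := by
  rcases h.cases_tail with h1 | ⟨c, _, hadj⟩
  · exact h1.symm
  · obtain ⟨e, he, hinc⟩ := hadj
    exact absurd (by rw [hinc]; exact Sym2.mem_mk_right c x) (hx e he)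

end Multigraph
namespace Multigraph

variable {V E : Type}

/-- Excision: walks between vertices other than `x` can avoid the unique edge at `x`. -/
lemma excision (G : Multigraph V E) {S : Set E} {g : E} {x z : V}
    (hginc : G.inc g = s(x,z)) (huniq : ∀ e ∈ S, x ∈ G.inc e → e = g)
    {a b : V} (ha : a ≠ x) (h : G.ReachOn S a b) :
    (b ≠ x → G.ReachOn (S \ {g}) a b) ∧ (b = x → G.ReachOn (S \ {g}) a z) := by
  have hxz : x ≠ z := G.inc_ne hginc
  have key : G.ReachOn (S \ {g}) a b ∨ (b = x ∧ G.ReachOn (S \ {g}) a z) := by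
    induction h with
    | refl => exact Or.inl Relation.ReflTransGen.refl
    | @tail p q hr hadj ih =>
      obtain ⟨e, he, hinc⟩ := hadj
      by_cases heg : e = g
      · subst heg
        rw [hginc] at hinc
        rcases Sym2.eq_iff.1 hinc with ⟨hpx, hqz⟩ | ⟨hpz, hqx⟩
        · -- p = x, q = z : then from ih, p = x cases
          subst hpx; subst hqz
          rcases ih with hxreach | ⟨_, hz⟩
          · -- Reach (S\{g}) a x with no edge at x in S\{g} : a = x, contra
            exfalso
            refine ha (G.reach_isolated (x := x) ?_ hxreach)
            intro e' ⟨he', hne⟩ hmem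
            exact hne (huniq e' he' hmem)
          · exact Or.inl hz
        · subst hpz; subst hqx
          rcases ih with hzreach | ⟨hzx, _⟩
          · exact Or.inr ⟨rfl, hzreach⟩
          · exact absurd hzx.symm hxz
      · rcases ih with hreach | ⟨hpx, _⟩
        · exact Or.inl (hreach.tail ⟨e, ⟨he, heg⟩, hinc⟩)
        · -- p = x, edge e at x in S, e ≠ g : contradiction
          subst hpx
          exact absurd (huniq e he (by rw [hinc]; exact Sym2.mem_mk_left _ _)) heg
  constructor
  · intro hbx
    rcases key with h1 | ⟨h2, _⟩
    · exact h1
    · exact absurd h2 hbx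
  · intro hbx
    rcases key with h1 | ⟨_, h2⟩
    · exfalso
      rw [hbx] at h1
      refine ha (G.reach_isolated (x := x) ?_ h1)
      intro e' ⟨he', hne⟩ hmem
      exact hne (huniq e' he' hmem)
    · exact h2

/-- Two proper colourings agreeing at a point agree along reachability. -/
lemma agreement (G : Multigraph V E) {S : Set E} {c c' : V → Bool}
    (hc : G.ProperOn S c) (hc' : G.ProperOn S c') {a b : V} (hab : c a = c' a)
    (h : G.ReachOn S a b) : c b = c' b := by
  induction h with
  | refl => exact hab
  | @tail p q _ hadj ih =>
    obtain ⟨e, he, hinc⟩ := hadj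
    have h1 := hc e he p q hinc
    have h2 := hc' e he p q hinc
    revert h1 h2 ih
    cases c p <;> cases c q <;> cases c' p <;> cases c' q <;> simp

/-- Last-edge extraction: a walk to `v ≠ q` ends with an edge at `v`, and before
that avoids `v` entirely. -/
lemma last_edge (G : Multigraph V E) {S : Set E} {q v : V}
    (h : G.ReachOn S q v) (hqv : q ≠ v) :
    ∃ g ∈ S, ∃ y : V, G.inc g = s(y,v) ∧
      G.ReachOn {e ∈ S | v ∉ G.inc e} q y := by
  induction h using Relation.ReflTransGen.head_induction_on with
  | refl => exact absurd rfl hqv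
  | @head p m hadj hr ih =>
    obtain ⟨e, he, hinc⟩ := hadj
    by_cases hmv : m = v
    · subst hmv
      exact ⟨e, he, p, hinc, Relation.ReflTransGen.refl⟩
    · obtain ⟨g, hg, y, hgy, hreach⟩ := ih hmv
      refine ⟨g, hg, y, hgy, Relation.ReflTransGen.head ⟨e, ⟨he, ?_⟩, hinc⟩ hreach⟩
      rw [hinc]
      rw [Sym2.mem_iff]
      rintro (h1 | h1)
      · exact hqv h1.symm
      · exact hmv h1.symm

/-- Patching: if the endpoints of `g` are joined avoiding `g`, then `g` is removable. -/
lemma patch (G : Multigraph V E) {S : Set E} {g : E} {y₁ y₂ : V}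
    (hg : G.inc g = s(y₁, y₂)) (hyy : G.ReachOn (S \ {g}) y₁ y₂)
    {a b : V} (h : G.ReachOn S a b) : G.ReachOn (S \ {g}) a b := by
  induction h with
  | refl => exact Relation.ReflTransGen.refl
  | @tail p q _ hadj ih =>
    obtain ⟨e, he, hinc⟩ := hadj
    by_cases heg : e = g
    · subst heg
      rw [hg] at hinc
      rcases Sym2.eq_iff.1 hinc with ⟨hp, hq⟩ | ⟨hp, hq⟩
      · subst hp; subst hq; exact ih.trans hyy
      · subst hp; subst hq; exact ih.trans (G.reachOn_symm hyy)
    · exact ih.tail ⟨e, ⟨he, heg⟩, hinc⟩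

/-- Decomposition of reachability after inserting an edge. -/
lemma insert_decomp (G : Multigraph V E) {S : Set E} {g : E} {y₁ y₂ : V}
    (hg : G.inc g = s(y₁, y₂)) {a b : V} (h : G.ReachOn (insert g S) a b) :
    G.ReachOn S a b ∨ (G.ReachOn S a y₁ ∧ G.ReachOn S y₂ b) ∨
      (G.ReachOn S a y₂ ∧ G.ReachOn S y₁ b) := by
  induction h with
  | refl => exact Or.inl Relation.ReflTransGen.refl
  | @tail p q _ hadj ih =>
    obtain ⟨e, he, hinc⟩ := hadj
    rcases Set.mem_insert_iff.1 he with heg | heS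
    · subst heg
      rw [hg] at hinc
      rcases Sym2.eq_iff.1 hinc with ⟨hp, hq⟩ | ⟨hp, hq⟩
      · subst hp; subst hq
        rcases ih with h1 | ⟨h1, h2⟩ | ⟨h1, h2⟩
        · exact Or.inr (Or.inl ⟨h1, Relation.ReflTransGen.refl⟩)
        · exact Or.inr (Or.inl ⟨h1, Relation.ReflTransGen.refl⟩)
        · exact Or.inl h1
      · subst hp; subst hq
        rcases ih with h1 | ⟨h1, h2⟩ | ⟨h1, h2⟩
        · exact Or.inr (Or.inr ⟨h1, Relation.ReflTransGen.refl⟩)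
        · exact Or.inl h1
        · exact Or.inr (Or.inr ⟨h1, Relation.ReflTransGen.refl⟩)
    · rcases ih with h1 | ⟨h1, h2⟩ | ⟨h1, h2⟩
      · exact Or.inl (h1.tail ⟨e, heS, hinc⟩)
      · exact Or.inr (Or.inl ⟨h1, h2.tail ⟨e, heS, hinc⟩⟩)
      · exact Or.inr (Or.inr ⟨h1, h2.tail ⟨e, heS, hinc⟩⟩)

end Multigraph
lemma almost_inj_ncard {α β : Type*} {f : α → β} {T : Set α} (hT : T.Finite) (p q : α)
    (h : ∀ x ∈ T, ∀ y ∈ T, f x = f y → x = y ∨ ((x = p ∨ x = q) ∧ (y = p ∨ y = q))) :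
    T.ncard ≤ (f '' T).ncard + 1 := by
  have hinj : Set.InjOn f (T \ {p}) := by
    rintro x ⟨hxT, hxp⟩ y ⟨hyT, hyp⟩ hxy
    rcases h x hxT y hyT hxy with h1 | ⟨hx, hy⟩
    · exact h1
    · rcases hx with hx | hx
      · exact absurd hx hxp
      · rcases hy with hy | hy
        · exact absurd hy hyp
        · rw [hx, hy]
    
  have h1 : T.ncard ≤ (T \ {p}).ncard + 1 := by
    have : T ⊆ insert p (T \ {p}) := by
      intro x hx
      by_cases hxp : x = p
      · exact Or.inl hxp
      · exact Or.inr ⟨hx, hxp⟩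
    calc T.ncard ≤ (insert p (T \ {p})).ncard :=
          Set.ncard_le_ncard this (hT.diff.insert p)
      _ ≤ (T \ {p}).ncard + 1 := Set.ncard_insert_le _ _
  have h2 : (T \ {p}).ncard = (f '' (T \ {p})).ncard :=
    (Set.ncard_image_of_injOn hinj).symm
  have h3 : (f '' (T \ {p})).ncard ≤ (f '' T).ncard :=
    Set.ncard_le_ncard (Set.image_mono (Set.diff_subset)) (hT.image f)
  omega

namespace Multigraph

variable {V E : Type}

/-- The component of `a` in edge set `S`. -/
def compMap (G : Multigraph V E) (S : Set E) (a : V) : Set V := {b | G.ReachOn S a b}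

lemma compMap_eq_iff (G : Multigraph V E) {S : Set E} {a b : V} :
    G.compMap S a = G.compMap S b ↔ G.ReachOn S a b := by
  constructor
  · intro h
    have : b ∈ G.compMap S b := Relation.ReflTransGen.refl
    rw [← h] at this
    exact this
  · intro h
    ext c
    exact ⟨fun hc => (G.reachOn_symm h).trans hc, fun hc => h.trans hc⟩

lemma reach_empty (G : Multigraph V E) {a b : V} (h : G.ReachOn (∅ : Set E) a b) : a = b := by
  induction h with
  | refl => rfl
  | tail _ hadj ih => obtain ⟨e, he, _⟩ := hadj; exact absurd he (Set.notMem_empty e)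

lemma ncard_le_ncard_add_ncomp (G : Multigraph V E) {S : Set E} (hS : S.Finite)
    (U : Set V) (hU : U.Finite) :
    U.ncard ≤ S.ncard + (G.compMap S '' U).ncard := by
  refine Set.Finite.induction_on
    (motive := fun S _ => U.ncard ≤ S.ncard + (G.compMap S '' U).ncard) S hS ?_ ?_
  · show U.ncard ≤ (∅ : Set E).ncard + (G.compMap ∅ '' U).ncard
    have : Set.InjOn (G.compMap ∅) U := by
      intro x _ y _ hxy
      exact G.reach_empty (G.compMap_eq_iff.1 hxy)
    rw [Set.ncard_image_of_injOn this]
    simp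
  · intro g S' hgS' hS'fin ih
    show U.ncard ≤ (insert g S').ncard + (G.compMap (insert g S') '' U).ncard
    beta_reduce at ih
    obtain ⟨y₁, y₂, hg⟩ : ∃ y₁ y₂, G.inc g = s(y₁, y₂) := ⟨_, _, (G.inc g).out_eq.symm⟩
    set Fm : Set V → Set V := fun X => {c | ∃ b ∈ X, G.ReachOn (insert g S') b c} with hFm
    have hkey : ∀ a : V, Fm (G.compMap S' a) = G.compMap (insert g S') a := by
      intro a
      ext c
      constructor
      · rintro ⟨b, hb, hbc⟩
        exact (G.reachOn_mono (Set.subset_insert g S') hb).trans hbc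
      · intro hc
        exact ⟨a, Relation.ReflTransGen.refl, hc⟩
    have himg : G.compMap (insert g S') '' U = Fm '' (G.compMap S' '' U) := by
      rw [Set.image_image]
      exact Set.image_congr (fun a _ => (hkey a).symm)
    have halmost : ∀ X ∈ G.compMap S' '' U, ∀ Y ∈ G.compMap S' '' U, Fm X = Fm Y →
        X = Y ∨ ((X = G.compMap S' y₁ ∨ X = G.compMap S' y₂) ∧
          (Y = G.compMap S' y₁ ∨ Y = G.compMap S' y₂)) := by
      rintro X ⟨a, _, rfl⟩ Y ⟨b, _, rfl⟩ hFXY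
      rw [hkey a, hkey b, G.compMap_eq_iff] at hFXY
      rcases G.insert_decomp hg hFXY with h1 | ⟨h1, h2⟩ | ⟨h1, h2⟩
      · exact Or.inl (G.compMap_eq_iff.2 h1)
      · exact Or.inr ⟨Or.inl (G.compMap_eq_iff.2 h1),
          Or.inr (G.compMap_eq_iff.2 (G.reachOn_symm h2))⟩
      · exact Or.inr ⟨Or.inr (G.compMap_eq_iff.2 h1),
          Or.inl (G.compMap_eq_iff.2 (G.reachOn_symm h2))⟩
    have hfin : (G.compMap S' '' U).Finite := hU.image _
    have hb := almost_inj_ncard hfin (G.compMap S' y₁) (G.compMap S' y₂) halmost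
    rw [← himg] at hb
    have hSins : (insert g S').ncard = S'.ncard + 1 :=
      Set.ncard_insert_of_notMem hgS' hS'fin
    omega

/-- A pairwise-reachable set has at most `|S| + 1` elements. -/
lemma conn_card_bound (G : Multigraph V E) {S : Set E} (hS : S.Finite)
    {U : Set V} (hU : U.Finite)
    (hconn : ∀ a ∈ U, ∀ b ∈ U, G.ReachOn S a b) :
    U.ncard ≤ S.ncard + 1 := by
  rcases U.eq_empty_or_nonempty with rfl | ⟨a₀, ha₀⟩
  · simp
  have himg : G.compMap S '' U ⊆ {G.compMap S a₀} := by
    rintro X ⟨a, ha, rfl⟩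
    exact (G.compMap_eq_iff.2 (hconn a₀ ha₀ a ha)).symm
  have h1 : (G.compMap S '' U).ncard ≤ 1 := by
    calc (G.compMap S '' U).ncard ≤ ({G.compMap S a₀} : Set (Set V)).ncard :=
          Set.ncard_le_ncard himg (Set.finite_singleton _)
      _ = 1 := Set.ncard_singleton _
  have := G.ncard_le_ncard_add_ncomp hS U hU
  omega

end Multigraph
namespace Multigraph

variable {V E : Type}

open Classical in
lemma degOn_eq_card (G : Multigraph V E) {S : Set E} (hS : S.Finite) (a : V) :
    G.degOn S a = (hS.toFinset.filter (fun e => a ∈ G.inc e)).card := by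
  have hfin : ({e ∈ S | a ∈ G.inc e}).Finite := hS.subset (Set.sep_subset _ _)
  rw [show G.degOn S a = ({e ∈ S | a ∈ G.inc e}).ncard from rfl,
    Set.ncard_eq_toFinset_card _ hfin]
  congr 1
  ext e
  simp [Set.Finite.mem_toFinset]

open Classical in
/-- Handshake: if every edge of `S` has both endpoints in `U`, the degree sum
over `U` is twice the number of edges. -/
lemma handshake (G : Multigraph V E) {S : Set E} {U : Set V} (hS : S.Finite)
    (hU : U.Finite) (hin : ∀ e ∈ S, ∀ x ∈ G.inc e, x ∈ U) :
    ∑ a ∈ hU.toFinset, G.degOn S a = 2 * S.ncard := by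
  have step1 : ∑ a ∈ hU.toFinset, G.degOn S a =
      ∑ a ∈ hU.toFinset, ∑ e ∈ hS.toFinset, (if a ∈ G.inc e then 1 else 0) := by
    refine Finset.sum_congr rfl (fun a _ => ?_)
    rw [G.degOn_eq_card hS a, Finset.card_filter]
  rw [step1, Finset.sum_comm]
  have step2 : ∀ e ∈ hS.toFinset, ∑ a ∈ hU.toFinset, (if a ∈ G.inc e then 1 else 0) = 2 := by
    intro e he
    rw [Set.Finite.mem_toFinset] at he
    obtain ⟨x, y, hxy⟩ : ∃ x y, G.inc e = s(x, y) := ⟨_, _, (G.inc e).out_eq.symm⟩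
    have hne : x ≠ y := G.inc_ne hxy
    have hfil : hU.toFinset.filter (fun a => a ∈ G.inc e) = {x, y} := by
      ext a
      simp only [Finset.mem_filter, Set.Finite.mem_toFinset, Finset.mem_insert,
        Finset.mem_singleton, hxy, Sym2.mem_iff]
      constructor
      · rintro ⟨_, h⟩; exact h
      · rintro (rfl | rfl)
        · exact ⟨hin e he a (by rw [hxy]; exact Sym2.mem_mk_left _ _), Or.inl rfl⟩
        · exact ⟨hin e he a (by rw [hxy]; exact Sym2.mem_mk_right _ _), Or.inr rfl⟩
    rw [← Finset.card_filter, hfil, Finset.card_insert_of_notMem (by simpa using hne),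
      Finset.card_singleton]
  rw [Finset.sum_congr rfl step2, Finset.sum_const, smul_eq_mul, mul_comm,
    Set.ncard_eq_toFinset_card _ hS]

end Multigraph
namespace Multigraph

variable {V E : Type}

lemma exists_edge_of_reach_ne (G : Multigraph V E) {S : Set E} {a b : V}
    (h : G.ReachOn S a b) (hab : a ≠ b) : ∃ e ∈ S, a ∈ G.inc e := by
  rcases h.cases_head with rfl | ⟨c, hadj, _⟩
  · exact absurd rfl hab
  · obtain ⟨e, he, hinc⟩ := hadj
    exact ⟨e, he, by rw [hinc]; exact Sym2.mem_mk_left _ _⟩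

lemma degOn_pos_of_reach_ne (G : Multigraph V E) {S : Set E} (hS : S.Finite) {a b : V}
    (h : G.ReachOn S a b) (hab : a ≠ b) : 1 ≤ G.degOn S a := by
  obtain ⟨e, he, hmem⟩ := G.exists_edge_of_reach_ne h hab
  have : e ∈ {e ∈ S | a ∈ G.inc e} := ⟨he, hmem⟩
  have hpos : ({e ∈ S | a ∈ G.inc e}).Nonempty := ⟨e, this⟩
  have hfin : ({e ∈ S | a ∈ G.inc e}).Finite := hS.subset (Set.sep_subset _ _)
  show 0 < ({e ∈ S | a ∈ G.inc e}).ncard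
  exact (Set.ncard_pos hfin).2 hpos

/-- Removing an edge from a tree separates its endpoints. -/
lemma tree_remove_edge_separates (G : Multigraph V E) {U : Set V} {S : Set E}
    (hU : U.Finite) (hS : S.Finite) (ht : G.IsTree U S) {g : E} (hg : g ∈ S)
    {a b : V} (hginc : G.inc g = s(a, b)) : ¬ G.ReachOn (S \ {g}) a b := by
  intro hr
  have hconn : ∀ u ∈ U, ∀ v ∈ U, G.ReachOn (S \ {g}) u v :=
    fun u hu v hv => G.patch hginc hr (ht.conn u hu v hv)
  have hb := G.conn_card_bound hS.diff hU hconn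
  have hd : (S \ {g}).ncard + 1 = S.ncard := Set.ncard_diff_singleton_add_one hg hS
  have := ht.card_eq
  omega

/-- A tree with at least two vertices has a leaf. -/
lemma tree_exists_leaf (G : Multigraph V E) {U : Set V} {S : Set E}
    (hU : U.Finite) (hS : S.Finite) (ht : G.IsTree U S) (h2 : 2 ≤ U.ncard) :
    ∃ ℓ ∈ U, G.degOn S ℓ = 1 := by
  by_contra hno
  push_neg at hno
  have hdeg2 : ∀ a ∈ U, 2 ≤ G.degOn S a := by
    intro a ha
    obtain ⟨b, hb, hab⟩ : ∃ b ∈ U, b ≠ a := by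
      by_contra hc
      push_neg at hc
      have : U ⊆ {a} := fun x hx => hc x hx
      have := Set.ncard_le_ncard this (Set.finite_singleton a)
      simp [Set.ncard_singleton] at this
      omega
    have h1 := G.degOn_pos_of_reach_ne hS (ht.conn a ha b hb) (Ne.symm hab)
    have := hno a ha
    omega
  have hsum := G.handshake hS hU ht.edges_in
  have hbound : ∑ a ∈ hU.toFinset, G.degOn S a ≥ ∑ a ∈ hU.toFinset, 2 :=
    Finset.sum_le_sum (fun a ha => hdeg2 a (hU.mem_toFinset.1 ha))
  rw [Finset.sum_const, smul_eq_mul] at hbound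
  have hcard : hU.toFinset.card = U.ncard := (Set.ncard_eq_toFinset_card _ hU).symm
  have := ht.card_eq
  omega

/-- Trees admit proper 2-colourings with any prescribed value at any vertex. -/
lemma tree_bipartite_aux (G : Multigraph V E) :
    ∀ n (U : Set V) (S : Set E), U.Finite → S.Finite → U.ncard = n → G.IsTree U S →
      ∀ w ∈ U, ∀ lam : Bool, ∃ c : V → Bool, G.ProperOn S c ∧ c w = lam := by
  intro n
  induction n using Nat.strong_induction_on with
  | _ n ih =>
    intro U S hU hS hn ht w hw lam
    by_cases hsmall : U.ncard ≤ 1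
    · have hS0 : S.ncard = 0 := by have := ht.card_eq; omega
      have hSe : S = ∅ := (Set.ncard_eq_zero hS).1 hS0
      exact ⟨fun _ => lam, by intro e he; rw [hSe] at he; exact absurd he (Set.notMem_empty e),
        rfl⟩
    push_neg at hsmall
    obtain ⟨ℓ, hℓU, hℓ1⟩ := G.tree_exists_leaf hU hS ht hsmall
    rw [G.degOn_def] at hℓ1
    obtain ⟨g, hgset⟩ := Set.ncard_eq_one.1 hℓ1
    have hgmem : g ∈ G.incSet S ℓ := by rw [hgset]; exact rfl
    obtain ⟨hgS, hℓg⟩ := hgmem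
    obtain ⟨p, hginc⟩ := Sym2.mem_iff_exists.1 hℓg
    have hpℓ : ℓ ≠ p := G.inc_ne hginc
    have hpU : p ∈ U := ht.edges_in g hgS p (by rw [hginc]; exact Sym2.mem_mk_right _ _)
    have huniq : ∀ e ∈ S, ℓ ∈ G.inc e → e = g := by
      intro e he hme
      have : e ∈ G.incSet S ℓ := ⟨he, hme⟩
      rw [hgset] at this
      exact this
    -- the smaller tree
    have ht' : G.IsTree (U \ {ℓ}) (S \ {g}) := by
      refine ⟨⟨p, hpU, hpℓ.symm⟩, ?_, ?_, ?_⟩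
      · rintro e ⟨heS, heg⟩ x hx
        refine ⟨ht.edges_in e heS x hx, ?_⟩
        intro hxl
        subst hxl
        exact heg (huniq e heS hx)
      · rintro a ⟨haU, haℓ⟩ b ⟨hbU, hbℓ⟩
        exact (G.excision hginc huniq haℓ (ht.conn a haU b hbU)).1 hbℓ
      · have h1 : (S \ {g}).ncard + 1 = S.ncard := Set.ncard_diff_singleton_add_one hgS hS
        have h2 : (U \ {ℓ}).ncard + 1 = U.ncard := Set.ncard_diff_singleton_add_one hℓU hU
        have := ht.card_eq
        omega
    have hlt : (U \ {ℓ}).ncard < n := by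
      have h2 : (U \ {ℓ}).ncard + 1 = U.ncard := Set.ncard_diff_singleton_add_one hℓU hU
      omega
    have hedges' : ∀ e ∈ S \ {g}, ∀ x ∈ G.inc e, x ≠ ℓ := by
      rintro e ⟨heS, heg⟩ x hx hxl
      subst hxl
      exact heg (huniq e heS hx)
    classical
    by_cases hwℓ : w = ℓ
    · -- anchor at p with colour !lam
      obtain ⟨c', hc', hc'p⟩ := ih _ hlt (U \ {ℓ}) (S \ {g}) hU.diff hS.diff rfl ht'
        p ⟨hpU, hpℓ.symm⟩ (!lam)
      refine ⟨Function.update c' ℓ lam, ?_, by rw [hwℓ, Function.update_self]⟩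
      intro e he u v hinc
      by_cases heg : e = g
      · subst heg
        rw [hginc] at hinc
        have hkey : (Function.update c' ℓ lam) ℓ ≠ (Function.update c' ℓ lam) p := by
          rw [Function.update_self, Function.update_of_ne (Ne.symm hpℓ), hc'p]
          cases lam <;> simp
        rcases Sym2.eq_iff.1 hinc with ⟨hu, hv⟩ | ⟨hu, hv⟩
        · subst hu; subst hv; exact hkey
        · subst hu; subst hv; exact hkey.symm
      · have hu' := hedges' e ⟨he, heg⟩ u (by rw [hinc]; exact Sym2.mem_mk_left _ _)
        have hv' := hedges' e ⟨he, heg⟩ v (by rw [hinc]; exact Sym2.mem_mk_right _ _)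
        rw [Function.update_of_ne hu', Function.update_of_ne hv']
        exact hc' e ⟨he, heg⟩ u v hinc
    · -- anchor at w with colour lam
      obtain ⟨c', hc', hc'w⟩ := ih _ hlt (U \ {ℓ}) (S \ {g}) hU.diff hS.diff rfl ht'
        w ⟨hw, hwℓ⟩ lam
      refine ⟨Function.update c' ℓ (!(c' p)), ?_, by rw [Function.update_of_ne hwℓ]; exact hc'w⟩
      intro e he u v hinc
      by_cases heg : e = g
      · subst heg
        rw [hginc] at hinc
        have hkey : (Function.update c' ℓ (!(c' p))) ℓ ≠ (Function.update c' ℓ (!(c' p))) p := by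
          rw [Function.update_self, Function.update_of_ne (Ne.symm hpℓ)]
          cases c' p <;> simp
        rcases Sym2.eq_iff.1 hinc with ⟨hu, hv⟩ | ⟨hu, hv⟩
        · subst hu; subst hv; exact hkey
        · subst hu; subst hv; exact hkey.symm
      · have hu' := hedges' e ⟨he, heg⟩ u (by rw [hinc]; exact Sym2.mem_mk_left _ _)
        have hv' := hedges' e ⟨he, heg⟩ v (by rw [hinc]; exact Sym2.mem_mk_right _ _)
        rw [Function.update_of_ne hu', Function.update_of_ne hv']
        exact hc' e ⟨he, heg⟩ u v hinc

lemma tree_bipartite (G : Multigraph V E) {U : Set V} {S : Set E}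
    (hU : U.Finite) (hS : S.Finite) (ht : G.IsTree U S) {w : V} (hw : w ∈ U) (lam : Bool) :
    ∃ c : V → Bool, G.ProperOn S c ∧ c w = lam :=
  G.tree_bipartite_aux U.ncard U S hU hS rfl ht w hw lam

end Multigraph
namespace Multigraph

variable {V E : Type}

/-- The vertex set of the component of `w`. -/
def comp (G : Multigraph V E) (F : Set E) (w : V) : Set V := {x | G.ReachOn F w x}

/-- The edge set of the component of `w`. -/
def compE (G : Multigraph V E) (F : Set E) (w : V) : Set E :=
  {e ∈ F | ∀ x ∈ G.inc e, x ∈ G.comp F w}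

variable (G : Multigraph V E) (F : Set E) (w : V)

lemma mem_comp_self : w ∈ G.comp F w := Relation.ReflTransGen.refl

lemma comp_closed {u v : V} (hu : u ∈ G.comp F w) (h : G.ReachOn F u v) :
    v ∈ G.comp F w := Relation.ReflTransGen.trans hu h

lemma compE_subset : G.compE F w ⊆ F := Set.sep_subset _ _

lemma edge_mem_compE {e : E} (he : e ∈ F) {u : V} (hu : u ∈ G.inc e)
    (huc : u ∈ G.comp F w) : e ∈ G.compE F w := by
  obtain ⟨b, hb⟩ := Sym2.mem_iff_exists.1 hu
  have hbc : b ∈ G.comp F w :=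
    G.comp_closed F w huc (Relation.ReflTransGen.single ⟨e, he, hb⟩)
  refine ⟨he, ?_⟩
  intro x hx
  rw [hb, Sym2.mem_iff] at hx
  rcases hx with rfl | rfl
  · exact huc
  · exact hbc

lemma incSet_compE_eq {a : V} (ha : a ∈ G.comp F w) :
    G.incSet F a = G.incSet (G.compE F w) a := by
  ext e
  constructor
  · rintro ⟨he, hmem⟩
    exact ⟨G.edge_mem_compE F w he hmem ha, hmem⟩
  · rintro ⟨he, hmem⟩
    exact ⟨(G.compE_subset F w) he, hmem⟩

lemma degOn_compE_eq {a : V} (ha : a ∈ G.comp F w) :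
    G.degOn (G.compE F w) a = G.degOn F a := by
  rw [G.degOn_def, G.degOn_def, G.incSet_compE_eq F w ha]

lemma reach_compE {a b : V} (ha : a ∈ G.comp F w) (h : G.ReachOn F a b) :
    G.ReachOn (G.compE F w) a b := by
  induction h with
  | refl => exact Relation.ReflTransGen.refl
  | @tail p q hr hadj ih =>
    obtain ⟨e, he, hinc⟩ := hadj
    have hpc : p ∈ G.comp F w := G.comp_closed F w ha hr
    exact ih.tail ⟨e, G.edge_mem_compE F w he
      (by rw [hinc]; exact Sym2.mem_mk_left _ _) hpc, hinc⟩

lemma conn_comp {a b : V} (ha : a ∈ G.comp F w) (hb : b ∈ G.comp F w) :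
    G.ReachOn (G.compE F w) a b :=
  G.reach_compE F w ha ((G.reachOn_symm ha).trans hb)

lemma compE_edges_in : ∀ e ∈ G.compE F w, ∀ x ∈ G.inc e, x ∈ G.comp F w :=
  fun _ he x hx => he.2 x hx

end Multigraph
namespace Multigraph

variable {V E : Type}

lemma incSet_diff (G : Multigraph V E) (S T : Set E) (a : V) :
    G.incSet (S \ T) a = G.incSet S a \ T := by
  ext e
  constructor
  · rintro ⟨⟨heS, heT⟩, hmem⟩; exact ⟨⟨heS, hmem⟩, heT⟩
  · rintro ⟨⟨heS, hmem⟩, heT⟩; exact ⟨⟨heS, heT⟩, hmem⟩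

lemma incSet_insert_mem (G : Multigraph V E) {S : Set E} {f : E} {a : V}
    (hmem : a ∈ G.inc f) : G.incSet (insert f S) a = insert f (G.incSet S a) := by
  ext e
  constructor
  · rintro ⟨he, hm⟩
    rcases he with rfl | he
    · exact Or.inl rfl
    · exact Or.inr ⟨he, hm⟩
  · rintro (rfl | ⟨he, hm⟩)
    · exact ⟨Or.inl rfl, hmem⟩
    · exact ⟨Or.inr he, hm⟩

lemma incSet_insert_not_mem (G : Multigraph V E) {S : Set E} {f : E} {a : V}
    (hmem : a ∉ G.inc f) : G.incSet (insert f S) a = G.incSet S a := by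
  ext e
  constructor
  · rintro ⟨he, hm⟩
    rcases he with rfl | he
    · exact absurd hm hmem
    · exact ⟨he, hm⟩
  · rintro ⟨he, hm⟩
    exact ⟨Or.inr he, hm⟩

lemma incSet_empty_of_edges_in (G : Multigraph V E) {S : Set E} {U : Set V}
    (hin : ∀ e ∈ S, ∀ x ∈ G.inc e, x ∈ U) {a : V} (ha : a ∉ U) :
    G.incSet S a = ∅ := by
  ext e
  simp only [Set.mem_empty_iff_false, iff_false]
  rintro ⟨he, hm⟩
  exact ha (hin e he a hm)

variable [Fintype V] [Fintype E]

variable (G : Multigraph V E) (F : Set E) (w : V)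

section Cycle

variable (hdeg2 : ∀ a ∈ G.comp F w, G.degOn F a = 2)

include hdeg2

lemma degOn_compE_two {a : V} (ha : a ∈ G.comp F w) : G.degOn (G.compE F w) a = 2 := by
  rw [G.degOn_compE_eq F w ha]; exact hdeg2 a ha

/-- In the 2-regular component, the edge and vertex counts agree. -/
lemma compE_ncard : (G.compE F w).ncard = (G.comp F w).ncard := by
  have hU : (G.comp F w).Finite := Set.toFinite _
  have hS : (G.compE F w).Finite := Set.toFinite _
  have hsum := G.handshake hS hU (G.compE_edges_in F w)
  have : ∑ a ∈ hU.toFinset, G.degOn (G.compE F w) a = 2 * (G.comp F w).ncard := by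
    rw [Finset.sum_congr rfl
      (fun a ha => G.degOn_compE_two F w hdeg2 (hU.mem_toFinset.1 ha)),
      Finset.sum_const, smul_eq_mul, mul_comm, Set.ncard_eq_toFinset_card _ hU]
  omega

/-- Removing one edge from the cycle keeps it connected. -/
lemma cycle_minus_edge_conn {e : E} (he : e ∈ G.compE F w) {y₁ y₂ : V}
    (hinc : G.inc e = s(y₁, y₂)) :
    ∀ a ∈ G.comp F w, ∀ b ∈ G.comp F w, G.ReachOn (G.compE F w \ {e}) a b := by
  classical
  have hy₁ : y₁ ∈ G.comp F w := he.2 y₁ (by rw [hinc]; exact Sym2.mem_mk_left _ _)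
  have hy₂ : y₂ ∈ G.comp F w := he.2 y₂ (by rw [hinc]; exact Sym2.mem_mk_right _ _)
  have hyy : G.ReachOn (G.compE F w \ {e}) y₁ y₂ := by
    by_contra hcon
    set A := {a ∈ G.comp F w | G.ReachOn (G.compE F w \ {e}) y₁ a} with hA
    have hy₁A : y₁ ∈ A := ⟨hy₁, Relation.ReflTransGen.refl⟩
    have hy₂A : y₂ ∉ A := fun h => hcon h.2
    set SA := {h ∈ G.compE F w | h ≠ e ∧ ∃ x ∈ G.inc h, x ∈ A} with hSA
    have hSAin : ∀ h ∈ SA, ∀ x ∈ G.inc h, x ∈ A := by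
      rintro h ⟨hhc, hhe, p, hp, hpA⟩ x hx
      obtain ⟨q, hq⟩ := Sym2.mem_iff_exists.1 hp
      have hqA : q ∈ A := by
        refine ⟨hhc.2 q (by rw [hq]; exact Sym2.mem_mk_right _ _), ?_⟩
        exact hpA.2.tail ⟨h, ⟨hhc, hhe⟩, hq⟩
      rw [hq, Sym2.mem_iff] at hx
      rcases hx with rfl | rfl
      · exact hpA
      · exact hqA
    have hAfin : A.Finite := Set.toFinite _
    have hSAfin : SA.Finite := Set.toFinite _
    have hsum := G.handshake hSAfin hAfin hSAin
    have hdegA : ∀ a ∈ A, G.incSet SA a = G.incSet (G.compE F w) a \ {e} := by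
      intro a haA
      ext h
      constructor
      · rintro ⟨⟨hhc, hhe, _⟩, hm⟩
        exact ⟨⟨hhc, hm⟩, hhe⟩
      · rintro ⟨⟨hhc, hm⟩, hhe⟩
        exact ⟨⟨hhc, hhe, a, hm, haA⟩, hm⟩
    have hdegval1 : G.degOn SA y₁ = 1 := by
      have h2 : (G.incSet (G.compE F w) y₁).ncard = 2 := G.degOn_compE_two F w hdeg2 hy₁A.1
      rw [G.degOn_def, hdegA y₁ hy₁A]
      have hein : e ∈ G.incSet (G.compE F w) y₁ :=
        ⟨he, by rw [hinc]; exact Sym2.mem_mk_left _ _⟩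
      have := Set.ncard_diff_singleton_add_one hein (Set.toFinite _)
      omega
    have hdegval2 : ∀ a ∈ A, a ≠ y₁ → G.degOn SA a = 2 := by
      intro a haA hay
      have h2 : (G.incSet (G.compE F w) a).ncard = 2 := G.degOn_compE_two F w hdeg2 haA.1
      rw [G.degOn_def, hdegA a haA]
      have hnotin : e ∉ G.incSet (G.compE F w) a := by
        rintro ⟨_, hmm⟩
        rw [hinc, Sym2.mem_iff] at hmm
        rcases hmm with rfl | rfl
        · exact hay rfl
        · exact hy₂A haA
      rw [Set.diff_singleton_eq_self hnotin]
      exact h2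
    have hy₁F : y₁ ∈ hAfin.toFinset := hAfin.mem_toFinset.2 hy₁A
    rw [← Finset.sum_erase_add _ _ hy₁F, hdegval1] at hsum
    have herase : ∑ a ∈ hAfin.toFinset.erase y₁, G.degOn SA a =
        2 * (hAfin.toFinset.erase y₁).card := by
      rw [Finset.sum_congr rfl (fun a ha => hdegval2 a
          (hAfin.mem_toFinset.1 (Finset.mem_of_mem_erase ha)) (Finset.ne_of_mem_erase ha)),
        Finset.sum_const, smul_eq_mul, mul_comm]
    rw [herase] at hsum
    have hcard : (hAfin.toFinset.erase y₁).card + 1 = A.ncard := by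
      rw [Finset.card_erase_add_one hy₁F, Set.ncard_eq_toFinset_card _ hAfin]
    omega
  intro a ha b hb
  exact G.patch hinc hyy (G.conn_comp F w ha hb)

/-- The cycle minus one edge is a (spanning) tree of the component. -/
lemma cycle_minus_edge_tree {e : E} (he : e ∈ G.compE F w) :
    G.IsTree (G.comp F w) (G.compE F w \ {e}) := by
  obtain ⟨y₁, y₂, hinc⟩ : ∃ y₁ y₂, G.inc e = s(y₁, y₂) := ⟨_, _, (G.inc e).out_eq.symm⟩
  refine ⟨⟨w, G.mem_comp_self F w⟩, ?_, G.cycle_minus_edge_conn F w hdeg2 he hinc, ?_⟩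
  · rintro h ⟨hhc, _⟩ x hx
    exact hhc.2 x hx
  · have h1 : (G.compE F w \ {e}).ncard + 1 = (G.compE F w).ncard :=
      Set.ncard_diff_singleton_add_one he (Set.toFinite _)
    rw [h1]
    exact G.compE_ncard F w hdeg2

/-- Leaves of the cycle-minus-an-edge tree are endpoints of the removed edge. -/
lemma cycle_minus_edge_leaf {e : E} (he : e ∈ G.compE F w) {ℓ : V}
    (hleaf : G.IsLeaf (G.compE F w \ {e}) ℓ) : ℓ ∈ G.inc e := by
  have hdef : G.degOn (G.compE F w \ {e}) ℓ = 1 := hleaf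
  rw [G.degOn_def, G.incSet_diff] at hdef
  by_cases hℓc : ℓ ∈ G.comp F w
  · by_contra hmem
    have hnotin : e ∉ G.incSet (G.compE F w) ℓ := fun h => hmem h.2
    rw [Set.diff_singleton_eq_self hnotin] at hdef
    have := G.degOn_compE_two F w hdeg2 hℓc
    rw [G.degOn_def] at this
    omega
  · rw [G.incSet_empty_of_edges_in (G.compE_edges_in F w) hℓc] at hdef
    simp at hdef

end Cycle

end Multigraph
namespace Multigraph

variable {V E : Type} [Fintype V] [Fintype E]

variable (G : Multigraph V E) (F : Set E) (w : V) (lam : Bool)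

/-- Part 1: all degrees in the component are 2. -/
lemma part1 (hF : G.IsWeakTwoFactor F)
    (hno : ¬ ∃ (U : Set V) (S : Set E) (c : V → Bool),
      w ∈ U ∧ G.IsTree U S ∧
      (∀ u ∈ U, ∀ v : V, G.ReachOn F u v → v ∈ U) ∧
      G.ProperOn S c ∧ c w = lam ∧
      (∀ v : V, G.IsLeaf S v → G.degree v = G.maxDegree → c v = false)) :
    ∀ v ∈ G.comp F w, G.degOn F v = 2 := by
  classical
  by_contra hcon
  push_neg at hcon
  obtain ⟨a, ha, hane⟩ := hcon
  have hle : G.degOn F a ≤ 2 := (hF a).1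
  have haQ : G.degOn F a ≤ 1 := by omega
  have hUfin : (G.comp F w).Finite := Set.toFinite _
  have hSfin : (G.compE F w).Finite := Set.toFinite _
  have hw : w ∈ G.comp F w := G.mem_comp_self F w
  -- the component is a tree
  have hcard : (G.compE F w).ncard + 1 = (G.comp F w).ncard := by
    have hub := G.conn_card_bound hSfin hUfin
      (fun x hx y hy => G.conn_comp F w hx hy)
    have hsum := G.handshake hSfin hUfin (G.compE_edges_in F w)
    have haF : a ∈ hUfin.toFinset := hUfin.mem_toFinset.2 ha
    rw [← Finset.sum_erase_add _ _ haF] at hsum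
    have h1 : G.degOn (G.compE F w) a ≤ 1 := by
      rw [G.degOn_compE_eq F w ha]; exact haQ
    have h2 : ∑ x ∈ hUfin.toFinset.erase a, G.degOn (G.compE F w) x ≤
        2 * (hUfin.toFinset.erase a).card := by
      rw [mul_comm, ← smul_eq_mul, ← Finset.sum_const]
      refine Finset.sum_le_sum (fun x hx => ?_)
      rw [G.degOn_compE_eq F w (hUfin.mem_toFinset.1 (Finset.mem_of_mem_erase hx))]
      exact (hF x).1
    have h3 : (hUfin.toFinset.erase a).card + 1 = (G.comp F w).ncard := by
      rw [Finset.card_erase_add_one haF, Set.ncard_eq_toFinset_card _ hUfin]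
    omega
  have htree : G.IsTree (G.comp F w) (G.compE F w) :=
    ⟨⟨w, hw⟩, G.compE_edges_in F w, fun x hx y hy => G.conn_comp F w hx hy, hcard⟩
  obtain ⟨c, hc, hcw⟩ := G.tree_bipartite hUfin hSfin htree hw lam
  refine hno ⟨G.comp F w, G.compE F w, c, hw, htree,
    fun x hx y hy => G.comp_closed F w hx hy, hc, hcw, ?_⟩
  intro v hleaf hdeg
  exfalso
  by_cases hvc : v ∈ G.comp F w
  · have h1 : G.degOn F v = 1 := by
      rw [← G.degOn_compE_eq F w hvc]; exact hleaf
    have := (hF v).2 (by omega)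
    omega
  · have : G.degOn (G.compE F w) v = 0 := by
      rw [G.degOn_def, G.incSet_empty_of_edges_in (G.compE_edges_in F w) hvc]
      simp
    have h1 : G.degOn (G.compE F w) v = 1 := hleaf
    omega

end Multigraph
namespace Multigraph

variable {V E : Type} [Fintype V] [Fintype E]

variable (G : Multigraph V E) (F : Set E) (w : V) (lam : Bool)

/-- Part 2: the component carries a proper colouring anchored at `w`. -/
lemma part2 (hdeg2 : ∀ a ∈ G.comp F w, G.degOn F a = 2)
    (hno : ¬ ∃ (U : Set V) (S : Set E) (c : V → Bool),
      w ∈ U ∧ G.IsTree U S ∧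
      (∀ u ∈ U, ∀ v : V, G.ReachOn F u v → v ∈ U) ∧
      G.ProperOn S c ∧ c w = lam ∧
      (∀ v : V, G.IsLeaf S v → G.degree v = G.maxDegree → c v = false)) :
    ∃ c : V → Bool, c w = lam ∧
      ∀ e ∈ F, ∀ u v : V, G.inc e = s(u, v) → u ∈ G.comp F w → c u ≠ c v := by
  classical
  have hUfin : (G.comp F w).Finite := Set.toFinite _
  have hSfin : (G.compE F w).Finite := Set.toFinite _
  have hw : w ∈ G.comp F w := G.mem_comp_self F w
  have hcol : ∀ e ∈ G.compE F w, ∃ c : V → Bool,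
      G.ProperOn (G.compE F w \ {e}) c ∧ c w = lam := fun e he =>
    G.tree_bipartite hUfin hSfin.diff (G.cycle_minus_edge_tree F w hdeg2 he) hw lam
  choose! c hc1 hc2 using hcol
  -- if both endpoints get the same colour, it must be `true`
  have claim_bt : ∀ e ∈ G.compE F w, ∀ x y : V, G.inc e = s(x, y) →
      c e x = c e y → c e x = true := by
    intro e he x y hinc heq
    by_contra hne
    have hfx : c e x = false := by cases h : c e x; rfl; exact absurd h hne
    have hfy : c e y = false := by rw [← heq]; exact hfx
    refine hno ⟨G.comp F w, G.compE F w \ {e}, c e, hw,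
      G.cycle_minus_edge_tree F w hdeg2 he,
      fun p hp q hq => G.comp_closed F w hp hq, hc1 e he, hc2 e he, ?_⟩
    intro ℓ hleaf _
    have hmem := G.cycle_minus_edge_leaf F w hdeg2 he hleaf
    rw [hinc, Sym2.mem_iff] at hmem
    rcases hmem with rfl | rfl
    · exact hfx
    · exact hfy
  by_cases hex : ∃ e ∈ G.compE F w, ∃ x y : V, G.inc e = s(x, y) ∧ c e x ≠ c e y
  · obtain ⟨e₀, he₀, x₀, y₀, hinc₀, hne₀⟩ := hex
    refine ⟨c e₀, hc2 e₀ he₀, ?_⟩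
    intro f hf u v hincf hu
    have hfc : f ∈ G.compE F w :=
      G.edge_mem_compE F w hf (by rw [hincf]; exact Sym2.mem_mk_left _ _) hu
    by_cases hfe : f = e₀
    · subst hfe
      rw [hincf] at hinc₀
      rcases Sym2.eq_iff.1 hinc₀ with ⟨rfl, rfl⟩ | ⟨rfl, rfl⟩
      · exact hne₀
      · exact hne₀.symm
    · exact hc1 e₀ he₀ f ⟨hfc, hfe⟩ u v hincf
  · exfalso
    push_neg at hex
    -- an edge at w
    have hdw : (G.incSet (G.compE F w) w).ncard = 2 := by
      rw [← G.degOn_def, G.degOn_compE_eq F w hw]; exact hdeg2 w hw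
    obtain ⟨e, he, hwe⟩ : ∃ e, e ∈ G.compE F w ∧ w ∈ G.inc e := by
      have : (G.incSet (G.compE F w) w).Nonempty := by
        rw [← Set.ncard_pos (Set.toFinite _)]; omega
      obtain ⟨e, he1, he2⟩ := this
      exact ⟨e, he1, he2⟩
    obtain ⟨y, hinc⟩ := Sym2.mem_iff_exists.1 hwe
    have h1 : c e w = true := claim_bt e he w y hinc (hex e he w y hinc)
    have hy : y ∈ G.comp F w := he.2 y (by rw [hinc]; exact Sym2.mem_mk_right _ _)
    -- the other edge at y
    have hdy : (G.incSet (G.compE F w) y).ncard = 2 := by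
      rw [← G.degOn_def, G.degOn_compE_eq F w hy]; exact hdeg2 y hy
    obtain ⟨g, g', hgg', hset⟩ := Set.ncard_eq_two.1 hdy
    have hein : e ∈ G.incSet (G.compE F w) y :=
      ⟨he, by rw [hinc]; exact Sym2.mem_mk_right _ _⟩
    rw [hset] at hein
    -- pick the edge distinct from e
    obtain ⟨e', he'mem, he'ne⟩ : ∃ e', e' ∈ G.incSet (G.compE F w) y ∧ e' ≠ e := by
      rcases hein with rfl | rfl
      · exact ⟨g', by rw [hset]; exact Or.inr rfl, (hgg'.symm : g' ≠ e)⟩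
      · exact ⟨g, by rw [hset]; exact Or.inl rfl, hgg'⟩
    obtain ⟨he', hye'⟩ := he'mem
    obtain ⟨z, hinc'⟩ := Sym2.mem_iff_exists.1 hye'
    have h3 : c e' y = true := claim_bt e' he' y z hinc' (hex e' he' y z hinc')
    have h4 : c e' w = lam := hc2 e' he'
    have hlam : lam = true := by rw [← hc2 e he]; exact h1
    exact (hc1 e' he' e ⟨he, he'ne.symm⟩ w y hinc) (by rw [h4, hlam, h3])

end Multigraph
namespace Multigraph

variable {V E : Type} [Fintype V] [Fintype E]

variable (G : Multigraph V E) (F : Set E) (w : V) (lam : Bool)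

/-- Part 3a: vertices coloured `true` have maximum degree. -/
lemma part3a (hdeg2 : ∀ a ∈ G.comp F w, G.degOn F a = 2)
    (hno : ¬ ∃ (U : Set V) (S : Set E) (c : V → Bool),
      w ∈ U ∧ G.IsTree U S ∧
      (∀ u ∈ U, ∀ v : V, G.ReachOn F u v → v ∈ U) ∧
      G.ProperOn S c ∧ c w = lam ∧
      (∀ v : V, G.IsLeaf S v → G.degree v = G.maxDegree → c v = false))
    (c : V → Bool) (hcw : c w = lam)
    (hcproper : ∀ e ∈ F, ∀ u v : V, G.inc e = s(u, v) → u ∈ G.comp F w → c u ≠ c v) :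
    ∀ a ∈ G.comp F w, c a = true → G.degree a = G.maxDegree := by
  classical
  intro a ha hca
  by_contra hdeg
  have hw : w ∈ G.comp F w := G.mem_comp_self F w
  have hda : (G.incSet (G.compE F w) a).ncard = 2 := by
    rw [← G.degOn_def, G.degOn_compE_eq F w ha]; exact hdeg2 a ha
  obtain ⟨e, he, hae⟩ : ∃ e, e ∈ G.compE F w ∧ a ∈ G.inc e := by
    have : (G.incSet (G.compE F w) a).Nonempty := by
      rw [← Set.ncard_pos (Set.toFinite _)]; omega
    obtain ⟨e, he1, he2⟩ := this
    exact ⟨e, he1, he2⟩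
  obtain ⟨b, hinc⟩ := Sym2.mem_iff_exists.1 hae
  have hcb : c b = false := by
    have := hcproper e ((G.compE_subset F w) he) a b hinc ha
    rw [hca] at this
    cases h : c b
    · rfl
    · rw [h] at this; exact absurd rfl this
  refine hno ⟨G.comp F w, G.compE F w \ {e}, c, hw,
    G.cycle_minus_edge_tree F w hdeg2 he,
    fun p hp q hq => G.comp_closed F w hp hq, ?_, hcw, ?_⟩
  · rintro f ⟨hfc, _⟩ x y hincf
    exact hcproper f ((G.compE_subset F w) hfc) x y hincf
      (hfc.2 x (by rw [hincf]; exact Sym2.mem_mk_left _ _))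
  · intro ℓ hleaf hdg
    have hmem := G.cycle_minus_edge_leaf F w hdeg2 he hleaf
    rw [hinc, Sym2.mem_iff] at hmem
    rcases hmem with rfl | rfl
    · exact absurd hdg hdeg
    · exact hcb

/-- Part 3b auxiliary: no edge joins two `true` vertices of the component
(case `w ≠ v`). -/
lemma part3b_aux (hdeg2 : ∀ a ∈ G.comp F w, G.degOn F a = 2)
    (hno : ¬ ∃ (U : Set V) (S : Set E) (c : V → Bool),
      w ∈ U ∧ G.IsTree U S ∧
      (∀ u ∈ U, ∀ v : V, G.ReachOn F u v → v ∈ U) ∧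
      G.ProperOn S c ∧ c w = lam ∧
      (∀ v : V, G.IsLeaf S v → G.degree v = G.maxDegree → c v = false))
    (c : V → Bool) (hcw : c w = lam)
    (hcproper : ∀ e ∈ F, ∀ u v : V, G.inc e = s(u, v) → u ∈ G.comp F w → c u ≠ c v)
    {f : E} {u v : V} (hincf : G.inc f = s(u, v)) (hu : u ∈ G.comp F w)
    (hv : v ∈ G.comp F w) (hcu : c u = true) (hcv : c v = true) (hwv : w ≠ v) :
    False := by
  classical
  have hw : w ∈ G.comp F w := G.mem_comp_self F w
  have huv : u ≠ v := G.inc_ne hincf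
  have hfF : f ∉ F := fun hf => (hcproper f hf u v hincf hu) (by rw [hcu, hcv])
  have hfc : f ∉ G.compE F w := fun hf => hfF ((G.compE_subset F w) hf)
  -- the two edges at v
  have hdv : (G.incSet (G.compE F w) v).ncard = 2 := by
    rw [← G.degOn_def, G.degOn_compE_eq F w hv]; exact hdeg2 v hv
  obtain ⟨g, g', hgg', hset⟩ := Set.ncard_eq_two.1 hdv
  have hgmem : g ∈ G.incSet (G.compE F w) v := by rw [hset]; exact Or.inl rfl
  have hg'mem : g' ∈ G.incSet (G.compE F w) v := by rw [hset]; exact Or.inr rfl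
  obtain ⟨hgc, hgv⟩ := hgmem
  obtain ⟨hg'c, hg'v⟩ := hg'mem
  obtain ⟨y, hgy⟩ := Sym2.mem_iff_exists.1 hgv
  obtain ⟨y', hg'y⟩ := Sym2.mem_iff_exists.1 hg'v
  have hyv : v ≠ y := G.inc_ne hgy
  have hy'v : v ≠ y' := G.inc_ne hg'y
  have hcy : c y = false := by
    have := hcproper g ((G.compE_subset F w) hgc) v y hgy hv
    rw [hcv] at this
    cases h : c y
    · rfl
    · rw [h] at this; exact absurd rfl this
  have hcy' : c y' = false := by
    have := hcproper g' ((G.compE_subset F w) hg'c) v y' hg'y hv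
    rw [hcv] at this
    cases h : c y'
    · rfl
    · rw [h] at this; exact absurd rfl this
  have hyu : y ≠ u := fun h => by rw [h, hcu] at hcy; cases hcy
  have hy'u : y' ≠ u := fun h => by rw [h, hcu] at hcy'; cases hcy'
  set Q : Set E := G.compE F w \ {g, g'} with hQ
  -- edges of `Q` avoid `v`
  have hQav : ∀ e ∈ Q, v ∉ G.inc e := by
    rintro e ⟨hec, heg⟩ hve
    have : e ∈ G.incSet (G.compE F w) v := ⟨hec, hve⟩
    rw [hset] at this
    exact heg this
  -- connectivity of `Q` away from `v`
  have hQconn : ∀ a ∈ G.comp F w, a ≠ v → ∀ b ∈ G.comp F w, b ≠ v →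
      G.ReachOn Q a b := by
    intro a ha hav b hb hbv
    have h1 : G.ReachOn (G.compE F w \ {g}) a b :=
      G.cycle_minus_edge_conn F w hdeg2 hgc hgy a ha b hb
    have huniq : ∀ e ∈ G.compE F w \ {g}, v ∈ G.inc e → e = g' := by
      rintro e ⟨hec, heg⟩ hve
      have : e ∈ G.incSet (G.compE F w) v := ⟨hec, hve⟩
      rw [hset] at this
      rcases this with rfl | rfl
      · exact absurd rfl heg
      · rfl
    have h2 := (G.excision hg'y huniq hav h1).1 hbv
    have heq : (G.compE F w \ {g}) \ {g'} = Q := by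
      rw [hQ, Set.diff_diff, Set.singleton_union]
    rwa [heq] at h2
  set ST : Set E := insert f Q with hST
  have hfQ : f ∉ Q := fun h => hfc h.1
  -- tree structure
  have hreachu : ∀ a ∈ G.comp F w, G.ReachOn ST a u := by
    intro a ha
    by_cases hav : a = v
    · subst hav
      exact Relation.ReflTransGen.single ⟨f, Or.inl rfl, by rw [hincf, Sym2.eq_swap]⟩
    · exact G.reachOn_mono (Set.subset_insert f Q) (hQconn a ha hav u hu huv)
  have htreeT : G.IsTree (G.comp F w) ST := by
    refine ⟨⟨w, hw⟩, ?_, ?_, ?_⟩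
    · rintro e (rfl | ⟨hec, _⟩) x hx
      · rw [hincf, Sym2.mem_iff] at hx
        rcases hx with rfl | rfl
        · exact hu
        · exact hv
      · exact hec.2 x hx
    · intro a ha b hb
      exact (hreachu a ha).trans (G.reachOn_symm (hreachu b hb))
    · have hsub : ({g, g'} : Set E) ⊆ G.compE F w := by
        rintro x (rfl | rfl)
        · exact hgc
        · exact hg'c
      have h1 : Q.ncard = (G.compE F w).ncard - 2 := by
        rw [hQ, Set.ncard_diff hsub (Set.toFinite _), Set.ncard_pair hgg']
      have h2 : ST.ncard = Q.ncard + 1 := Set.ncard_insert_of_notMem hfQ (Set.toFinite _)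
      have h3 : (G.compE F w).ncard = (G.comp F w).ncard := G.compE_ncard F w hdeg2
      have h4 : 2 ≤ (G.comp F w).ncard := by
        have : ({u, v} : Set V) ⊆ G.comp F w := by
          rintro x (rfl | rfl)
          · exact hu
          · exact hv
        have := Set.ncard_le_ncard this (Set.toFinite _)
        rw [Set.ncard_pair huv] at this
        omega
      omega
  -- the colouring flipped at `v`
  set c'' : V → Bool := Function.update c v false with hc''
  have hc''v : c'' v = false := Function.update_self _ _ _
  have hc''ne : ∀ x : V, x ≠ v → c'' x = c x := fun x hx => Function.update_of_ne hx _ _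
  refine hno ⟨G.comp F w, ST, c'', hw, htreeT,
    fun p hp q hq => G.comp_closed F w hp hq, ?_, ?_, ?_⟩
  · -- properness
    rintro e (rfl | heQ) x z hince
    · rw [hincf] at hince
      rcases Sym2.eq_iff.1 hince with ⟨rfl, rfl⟩ | ⟨rfl, rfl⟩
      · rw [hc''ne u huv, hcu, hc''v]; simp
      · rw [hc''ne u huv, hcu, hc''v]; simp
    · have hxv : x ≠ v := by
        intro hxv
        exact hQav e heQ (by rw [hince, ← hxv]; exact Sym2.mem_mk_left _ _)
      have hzv : z ≠ v := by
        intro hzv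
        exact hQav e heQ (by rw [hince, ← hzv]; exact Sym2.mem_mk_right _ _)
      rw [hc''ne x hxv, hc''ne z hzv]
      exact hcproper e ((G.compE_subset F w) heQ.1) x z hince
        (heQ.1.2 x (by rw [hince]; exact Sym2.mem_mk_left _ _))
  · rw [hc''ne w hwv]; exact hcw
  · -- leaves
    intro ℓ hleaf _
    by_cases hℓv : ℓ = v
    · rw [hℓv]; exact hc''v
    by_cases hℓu : ℓ = u
    · exfalso
      subst hℓu
      have hgℓ : ℓ ∉ G.inc g := by
        rw [hgy, Sym2.mem_iff]
        rintro (rfl | rfl)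
        · exact huv rfl
        · exact hyu rfl
      have hg'ℓ : ℓ ∉ G.inc g' := by
        rw [hg'y, Sym2.mem_iff]
        rintro (rfl | rfl)
        · exact huv rfl
        · exact hy'u rfl
      have hQu : G.incSet Q ℓ = G.incSet (G.compE F w) ℓ := by
        rw [hQ, G.incSet_diff]
        ext x
        constructor
        · rintro ⟨hx, _⟩; exact hx
        · intro hx
          refine ⟨hx, ?_⟩
          rintro (rfl | rfl)
          · exact hgℓ hx.2
          · exact hg'ℓ hx.2
      have hmemf : ℓ ∈ G.inc f := by rw [hincf]; exact Sym2.mem_mk_left _ _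
      have hSTu : G.incSet ST ℓ = insert f (G.incSet Q ℓ) := G.incSet_insert_mem hmemf
      have hfull : (G.incSet (G.compE F w) ℓ).ncard = 2 := by
        rw [← G.degOn_def, G.degOn_compE_eq F w hu]; exact hdeg2 ℓ hu
      have hfnot : f ∉ G.incSet Q ℓ := fun h => hfQ h.1
      have h3 : (G.incSet ST ℓ).ncard = 3 := by
        rw [hSTu, Set.ncard_insert_of_notMem hfnot (Set.toFinite _), hQu, hfull]
      have h1 : G.degOn ST ℓ = 1 := hleaf
      rw [G.degOn_def] at h1
      omega
    · -- ℓ ∉ {u, v}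
      have hℓf : ℓ ∉ G.inc f := by
        rw [hincf, Sym2.mem_iff]
        rintro (rfl | rfl)
        · exact hℓu rfl
        · exact hℓv rfl
      have hQeq : G.incSet ST ℓ = G.incSet Q ℓ := G.incSet_insert_not_mem hℓf
      have hdefℓ : (G.incSet Q ℓ).ncard = 1 := by
        have := hleaf
        rw [show G.IsLeaf ST ℓ ↔ G.degOn ST ℓ = 1 from Iff.rfl] at this
        rw [G.degOn_def, hQeq] at this
        exact this
      by_cases hℓc : ℓ ∈ G.comp F w
      · have hfull : (G.incSet (G.compE F w) ℓ).ncard = 2 := by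
          rw [← G.degOn_def, G.degOn_compE_eq F w hℓc]; exact hdeg2 ℓ hℓc
        have hdiff : G.incSet Q ℓ = G.incSet (G.compE F w) ℓ \ {g, g'} := by
          rw [hQ, G.incSet_diff]
        have hone : ℓ ∈ G.inc g ∨ ℓ ∈ G.inc g' := by
          by_contra hcon
          push_neg at hcon
          have : G.incSet (G.compE F w) ℓ \ {g, g'} = G.incSet (G.compE F w) ℓ := by
            ext x
            constructor
            · rintro ⟨hx, _⟩; exact hx
            · intro hx
              refine ⟨hx, ?_⟩
              rintro (rfl | rfl)
              · exact hcon.1 hx.2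
              · exact hcon.2 hx.2
          rw [hdiff, this, hfull] at hdefℓ
          omega
        rw [hc''ne ℓ hℓv]
        rcases hone with hone | hone
        · rw [hgy, Sym2.mem_iff] at hone
          rcases hone with rfl | rfl
          · exact absurd rfl hℓv
          · exact hcy
        · rw [hg'y, Sym2.mem_iff] at hone
          rcases hone with rfl | rfl
          · exact absurd rfl hℓv
          · exact hcy'
      · have : G.incSet Q ℓ = ∅ := by
          have hsub : G.incSet Q ℓ ⊆ G.incSet (G.compE F w) ℓ := by
            rintro x ⟨⟨hx1, _⟩, hx2⟩; exact ⟨hx1, hx2⟩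
          rw [G.incSet_empty_of_edges_in (G.compE_edges_in F w) hℓc] at hsub
          exact Set.subset_empty_iff.1 hsub
        rw [this] at hdefℓ
        simp at hdefℓ

end Multigraph


/-- Let `G` be a 2-edge-connected non-regular multigraph, `F` a
weak 2-factor of `G`, `w ∈ V(G)` and `lam ∈ {0,1}` (with `false` for type 0 and
`true` for type 1). A tree in `G` is *good* if its vertex set is a union of
vertex sets of components of `F` (equivalently, is closed under reachability in
`F`). Suppose `G` has no good weakly even `(w, lam)`-tree. Then the component
`C₀ = {v | w ⟶F v}` of `F` containing `w` is an even cycle (every vertex of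
`C₀` has degree 2 in `F`, and `C₀` admits a proper 2-colouring); moreover for
the `(w, lam)`-bipartition `(X₀, Y₀)` of `C₀` (given by a proper 2-colouring
`c` of `C₀` with `c w = lam`, where `Y₀` is the set of vertices of `C₀`
coloured `true`), every vertex of `Y₀` has degree `Δ(G)` in `G` and `Y₀` is an
independent set in `G`. -/
theorem component_even_cycle_of_no_good_tree {V E : Type} [Fintype V] [Fintype E]
    (G : Multigraph V E) (h2ec : G.TwoEdgeConnected) (hnreg : ¬ G.IsRegular)
    (F : Set E) (hF : G.IsWeakTwoFactor F) (w : V) (lam : Bool)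
    (hno : ¬ ∃ (U : Set V) (S : Set E) (c : V → Bool),
      w ∈ U ∧ G.IsTree U S ∧
      (∀ u ∈ U, ∀ v : V, G.ReachOn F u v → v ∈ U) ∧
      G.ProperOn S c ∧ c w = lam ∧
      (∀ v : V, G.IsLeaf S v → G.degree v = G.maxDegree → c v = false)) :
    (∀ v ∈ {x : V | G.ReachOn F w x}, G.degOn F v = 2) ∧
    (∃ c : V → Bool, c w = lam ∧
      ∀ e ∈ F, ∀ u v : V, G.inc e = s(u, v) → u ∈ {x : V | G.ReachOn F w x} → c u ≠ c v) ∧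
    (∀ c : V → Bool, c w = lam →
      (∀ e ∈ F, ∀ u v : V, G.inc e = s(u, v) → u ∈ {x : V | G.ReachOn F w x} → c u ≠ c v) →
      (∀ v ∈ {x : V | G.ReachOn F w x}, c v = true → G.degree v = G.maxDegree) ∧
      (∀ (e : E) (u v : V), G.inc e = s(u, v) →
        u ∈ {x : V | G.ReachOn F w x} → c u = true →
        v ∈ {x : V | G.ReachOn F w x} → c v = true → False)) := by
  classical
  have hdeg2 : ∀ a ∈ G.comp F w, G.degOn F a = 2 := G.part1 F w lam hF hno
  refine ⟨hdeg2, G.part2 F w lam hdeg2 hno, ?_⟩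
  intro c hcw hcproper
  refine ⟨G.part3a F w lam hdeg2 hno c hcw hcproper, ?_⟩
  intro f u v hincf hu hcu hv hcv
  by_cases hwv : w = v
  · have hwu : w ≠ u := fun h => (G.inc_ne hincf) (by rw [← h, ← hwv])
    have hincf' : G.inc f = s(v, u) := by rw [hincf, Sym2.eq_swap]
    exact G.part3b_aux F w lam hdeg2 hno c hcw hcproper hincf' hv hu hcv hcu hwu
  · exact G.part3b_aux F w lam hdeg2 hno c hcw hcproper hincf hu hv hcu hcv hwv
end

section
/- Let G be a 2-edge-connected, non-regular finite graph (multiple edges allowed, no loops), let F be a weak 2-factor of G, let w ∈ V(G) and λ ∈ {0,1}. Let T be a good weakly even (w,λ)-tree in G of maximum order, with (w,λ)-bipartition (X₀,Y₀), and suppose V(T) ≠ V(G). Then no edge of G joins a vertex of X₀ to a vertex outside V(T), and some edge of G joins a vertex of Y₀ to a vertex outside V(T). -/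
namespace Multigraph

variable {V E : Type} {G : Multigraph V E}

lemma aux_adj_symm {S : Set E} : Symmetric (G.AdjOn S) := by
  rintro u v ⟨e, he, hinc⟩
  exact ⟨e, he, by rw [Sym2.eq_swap] at hinc; exact hinc⟩

lemma aux_reach_symm {S : Set E} {u v : V} (h : G.ReachOn S u v) : G.ReachOn S v u :=
  by haveI : Std.Symm (G.AdjOn S) := ⟨fun a b hab => aux_adj_symm hab⟩; exact (Relation.ReflTransGen.stdSymm (r := G.AdjOn S)).symm _ _ h

lemma aux_reach_trans {S : Set E} {u v x : V} (h : G.ReachOn S u v) (h' : G.ReachOn S v x) :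
    G.ReachOn S u x := Relation.ReflTransGen.trans h h'

lemma aux_reach_mono {S T : Set E} (hST : S ⊆ T) {u v : V} (h : G.ReachOn S u v) :
    G.ReachOn T u v := by
  refine Relation.ReflTransGen.mono ?_ u v h
  rintro a b ⟨e, he, hinc⟩
  exact ⟨e, hST he, hinc⟩

lemma aux_degOn_union [Fintype E] {A B : Set E} (h : Disjoint A B) (x : V) :
    G.degOn (A ∪ B) x = G.degOn A x + G.degOn B x := by
  unfold degOn
  rw [show {e ∈ A ∪ B | x ∈ G.inc e} = {e ∈ A | x ∈ G.inc e} ∪ {e ∈ B | x ∈ G.inc e} by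
    ext g; simp [Set.mem_union, or_and_right]]
  exact Set.ncard_union_eq (h.mono (Set.sep_subset _ _) (Set.sep_subset _ _))
    (Set.toFinite _) (Set.toFinite _)

lemma aux_degOn_singleton_pos [Fintype E] {e : E} {x : V} (h : x ∈ G.inc e) :
    G.degOn {e} x = 1 := by
  unfold degOn
  rw [show {g ∈ ({e} : Set E) | x ∈ G.inc g} = {e} by ext g; aesop]
  simp

lemma aux_degOn_singleton_neg [Fintype E] {e : E} {x : V} (h : x ∉ G.inc e) :
    G.degOn {e} x = 0 := by
  unfold degOn
  rw [show {g ∈ ({e} : Set E) | x ∈ G.inc g} = ∅ by ext g; aesop]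
  simp

lemma aux_one_le_degOn [Fintype E] {S : Set E} {e : E} {x : V} (he : e ∈ S)
    (hx : x ∈ G.inc e) : 1 ≤ G.degOn S x := by
  have : ({e} : Set E) ⊆ {g ∈ S | x ∈ G.inc g} := by rintro g rfl; exact ⟨he, hx⟩
  calc (1:ℕ) = ({e} : Set E).ncard := by simp
  _ ≤ _ := Set.ncard_le_ncard this (Set.toFinite _)

lemma aux_two_le_degOn [Fintype E] {S : Set E} {a b : E} {x : V} (ha : a ∈ S) (hb : b ∈ S)
    (hxa : x ∈ G.inc a) (hxb : x ∈ G.inc b) (hab : a ≠ b) : 2 ≤ G.degOn S x := by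
  have hsub : ({a, b} : Set E) ⊆ {g ∈ S | x ∈ G.inc g} := by
    rintro g (rfl | rfl) <;> exact ⟨by assumption, by assumption⟩
  calc (2:ℕ) = ({a, b} : Set E).ncard := by rw [Set.ncard_pair hab]
  _ ≤ _ := Set.ncard_le_ncard hsub (Set.toFinite _)

lemma aux_three_le_degOn [Fintype E] {S : Set E} {a b c : E} {x : V}
    (ha : a ∈ S) (hb : b ∈ S) (hc : c ∈ S)
    (hxa : x ∈ G.inc a) (hxb : x ∈ G.inc b) (hxc : x ∈ G.inc c)
    (hab : a ≠ b) (hac : a ≠ c) (hbc : b ≠ c) : 3 ≤ G.degOn S x := by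
  have hsub : ({a, b, c} : Set E) ⊆ {g ∈ S | x ∈ G.inc g} := by
    rintro g (rfl | rfl | rfl) <;> exact ⟨by assumption, by assumption⟩
  calc (3:ℕ) = ({a, b, c} : Set E).ncard := (Set.ncard_eq_three.mpr ⟨a, b, c, hab, hac, hbc, rfl⟩).symm
  _ ≤ _ := Set.ncard_le_ncard hsub (Set.toFinite _)

/-- A chain (path) in the spanning subgraph with edge set `F`:
`z 0, …, z n` are distinct vertices, and for `i < n` the edge `e i ∈ F`
joins `z i` and `z (i+1)`. -/
def AuxChain (G : Multigraph V E) (F : Set E) (n : ℕ) (z : ℕ → V) (e : ℕ → E) : Prop :=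
  (∀ i, i ≤ n → ∀ j, j ≤ n → z i = z j → i = j) ∧
  (∀ i, i < n → e i ∈ F ∧ G.inc (e i) = s(z i, z (i+1)))

lemma aux_chain_reach {F S : Set E} {n : ℕ} {z : ℕ → V} {e : ℕ → E}
    (hch : G.AuxChain F n z e) (hS : ∀ i, i < n → e i ∈ S) :
    ∀ i, i ≤ n → ∀ j, j ≤ n → G.ReachOn S (z i) (z j) := by
  have key : ∀ j, j ≤ n → G.ReachOn S (z 0) (z j) := by
    intro j hj
    induction j with
    | zero => exact Relation.ReflTransGen.refl
    | succ k ih =>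
      exact (ih (by omega)).tail ⟨e k, hS k (by omega), (hch.2 k (by omega)).2⟩
  intro i hi j hj
  exact aux_reach_trans (aux_reach_symm (key i hi)) (key j hj)

end Multigraph

namespace Multigraph

variable {V E : Type} {G : Multigraph V E}

lemma aux_mem_left {a b : V} {g : E} (h : G.inc g = s(a, b)) : a ∈ G.inc g := by
  rw [h]; exact Sym2.mem_mk_left a b

lemma aux_mem_right {a b : V} {g : E} (h : G.inc g = s(a, b)) : b ∈ G.inc g := by
  rw [h]; exact Sym2.mem_mk_right a b

lemma aux_ne_of_inc {g g' : E} (h : G.inc g ≠ G.inc g') : g ≠ g' :=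
  fun hh => h (by rw [hh])

/-- Extend a chain at the right end. -/
lemma aux_chain_extR {F : Set E} {n : ℕ} {z : ℕ → V} {e : ℕ → E} {f : E} {x : V}
    (hch : G.AuxChain F n z e) (hf : f ∈ F) (hfx : G.inc f = s(z n, x))
    (hx : ∀ i, i ≤ n → z i ≠ x) :
    G.AuxChain F (n+1) (fun k => if k ≤ n then z k else x)
      (fun k => if k < n then e k else f) := by
  constructor
  · intro i hi j hj hz
    by_cases h1 : i ≤ n <;> by_cases h2 : j ≤ n
    · simp only [if_pos h1, if_pos h2] at hz; exact hch.1 i h1 j h2 hz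
    · simp only [if_pos h1, if_neg h2] at hz; exact absurd hz (hx i h1)
    · simp only [if_neg h1, if_pos h2] at hz; exact absurd hz.symm (hx j h2)
    · omega
  · intro i hi
    by_cases h1 : i < n
    · simp only [if_pos h1, if_pos (show i ≤ n by omega), if_pos (show i + 1 ≤ n by omega)]
      exact hch.2 i h1
    · simp only [if_neg h1, if_pos (show i ≤ n by omega), if_neg (show ¬ i + 1 ≤ n by omega)]
      rw [show i = n by omega]
      exact ⟨hf, hfx⟩

/-- Reverse a chain. -/
lemma aux_chain_rev {F : Set E} {n : ℕ} {z : ℕ → V} {e : ℕ → E}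
    (hch : G.AuxChain F n z e) :
    G.AuxChain F n (fun i => z (n - i)) (fun i => e (n - 1 - i)) := by
  constructor
  · intro i hi j hj hz
    have := hch.1 (n - i) (by omega) (n - j) (by omega) hz
    omega
  · intro i hi
    have h := hch.2 (n - 1 - i) (by omega)
    refine ⟨h.1, ?_⟩
    have h2 := h.2
    have e1 : n - 1 - i + 1 = n - i := by omega
    rw [e1] at h2
    simp only
    rw [h2, show n - (i + 1) = n - 1 - i by omega]
    exact Sym2.eq_swap

/-- There is a maximal chain through `v` covering the whole `F`-component of `v`. -/
lemma aux_exists_max_chain [Fintype V] [Fintype E] [Nonempty E] {F : Set E}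
    (hdeg : ∀ x : V, G.degOn F x ≤ 2) (v : V) :
    ∃ n z e p, G.AuxChain F n z e ∧ p ≤ n ∧ z p = v ∧
      (∀ x : V, G.ReachOn F v x → ∃ i, i ≤ n ∧ z i = x) := by
  classical
  set P : ℕ → Prop := fun n => ∃ z e p, G.AuxChain F n z e ∧ p ≤ n ∧ z p = v with hP
  have hbound : ∀ m, P m → m + 1 ≤ Fintype.card V := by
    rintro m ⟨z, e, p, hch, -, -⟩
    have hinj : Function.Injective (fun i : Fin (m+1) => z i) := by
      intro i j h
      exact Fin.ext (hch.1 i (by omega) j (by omega) h)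
    calc m + 1 = Fintype.card (Fin (m+1)) := (Fintype.card_fin _).symm
    _ ≤ _ := Fintype.card_le_of_injective _ hinj
  have hP0 : P 0 := ⟨fun _ => v, fun _ => Classical.arbitrary E, 0,
    ⟨by intro i hi j hj _; omega, fun i hi => absurd hi (by omega)⟩, le_refl 0, rfl⟩
  set n := Nat.findGreatest P (Fintype.card V) with hn
  have hPn : P n := Nat.findGreatest_spec (Nat.zero_le _) hP0
  have hnot : ¬ P (n+1) := by
    intro h
    have h1 := hbound _ h
    have h2 := Nat.le_findGreatest (show n + 1 ≤ Fintype.card V by omega) h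
    omega
  obtain ⟨z, e, p, hch, hp, hzp⟩ := hPn
  refine ⟨n, z, e, p, hch, hp, hzp, ?_⟩
  intro x hx
  induction hx with
  | refl => exact ⟨p, hp, hzp⟩
  | tail hreach hadj ih =>
    rename_i y x'
    by_contra hnot2
    obtain ⟨i, hi, hzi⟩ := ih
    obtain ⟨f, hf, hfx⟩ := hadj
    rw [← hzi] at hfx
    have hxz : ∀ j, j ≤ n → z j ≠ x' := fun j hj h => hnot2 ⟨j, hj, h⟩
    by_cases hiN : i = n
    · subst hiN
      exact hnot ⟨_, _, p, aux_chain_extR hch hf hfx hxz, by omega,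
        by simp only [if_pos hp]; exact hzp⟩
    · by_cases hi0 : i = 0
      · subst hi0
        have hrev := aux_chain_rev hch
        have hfx' : G.inc f = s(z (n - n), x') := by rwa [Nat.sub_self]
        have hxz' : ∀ j, j ≤ n → z (n - j) ≠ x' := fun j hj => hxz (n - j) (by omega)
        refine hnot ⟨_, _, n - p, aux_chain_extR hrev hf hfx' hxz', by omega, ?_⟩
        simp only [if_pos (show n - p ≤ n by omega)]
        rw [show n - (n - p) = p by omega]
        exact hzp
      · -- interior vertex: three distinct edges, contradiction with degree ≤ 2
        have h1 := hch.2 (i-1) (by omega)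
        have h2 := hch.2 i (by omega)
        have e1 : i - 1 + 1 = i := by omega
        rw [e1] at h1
        have hne1 : e (i-1) ≠ e i := by
          apply aux_ne_of_inc
          rw [h1.2, h2.2]
          intro hq
          rcases Sym2.eq_iff.mp hq with ⟨ha, hb⟩ | ⟨ha, hb⟩
          · have := hch.1 (i-1) (by omega) i (by omega) ha; omega
          · have := hch.1 (i-1) (by omega) (i+1) (by omega) ha; omega
        have hne2 : e (i-1) ≠ f := by
          apply aux_ne_of_inc
          rw [h1.2, hfx]
          intro hq
          rcases Sym2.eq_iff.mp hq with ⟨ha, hb⟩ | ⟨ha, hb⟩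
          · exact hxz i hi hb
          · exact hxz (i-1) (by omega) ha
        have hne3 : e i ≠ f := by
          apply aux_ne_of_inc
          rw [h2.2, hfx]
          intro hq
          rcases Sym2.eq_iff.mp hq with ⟨ha, hb⟩ | ⟨ha, hb⟩
          · exact hxz (i+1) (by omega) hb
          · exact hxz i (by omega) ha
        have h3 : 3 ≤ G.degOn F (z i) :=
          aux_three_le_degOn h1.1 h2.1 hf (aux_mem_right h1.2) (aux_mem_left h2.2)
            (aux_mem_left hfx) hne1 hne2 hne3
        have := hdeg (z i)
        omega

end Multigraph

namespace Multigraph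

variable {V E : Type} {G : Multigraph V E}

/-- If the right end of a maximal covering chain has two `F`-edges, then the second
edge closes the chain into a cycle. -/
lemma aux_cycle_edge [Fintype E] {F : Set E} {n : ℕ} {z : ℕ → V} {e : ℕ → E}
    (hdeg : ∀ x : V, G.degOn F x ≤ 2) (hch : G.AuxChain F n z e)
    (hcov : ∀ x : V, G.ReachOn F (z 0) x → ∃ i, i ≤ n ∧ z i = x)
    (hn : 1 ≤ n) (hdn : 2 ≤ G.degOn F (z n)) :
    ∃ f, f ∈ F ∧ G.inc f = s(z n, z 0) ∧ f ≠ e (n-1) := by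
  have h1 := hch.2 (n-1) (by omega)
  have e1 : n - 1 + 1 = n := by omega
  rw [e1] at h1
  have hmem : e (n-1) ∈ {g ∈ F | z n ∈ G.inc g} := ⟨h1.1, aux_mem_right h1.2⟩
  have hex : ∃ f ∈ {g ∈ F | z n ∈ G.inc g}, f ≠ e (n-1) := by
    by_contra hcon
    push_neg at hcon
    have hsub : {g ∈ F | z n ∈ G.inc g} ⊆ {e (n-1)} := fun g hg => hcon g hg
    have hle := Set.ncard_le_ncard hsub (Set.toFinite _)
    simp only [Set.ncard_singleton] at hle
    have : G.degOn F (z n) ≤ 1 := hle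
    omega
  obtain ⟨f, ⟨hfF, hfmem⟩, hfne⟩ := hex
  obtain ⟨y, hy⟩ := Sym2.mem_iff_exists.mp hfmem
  have hreachy : G.ReachOn F (z 0) y := by
    refine Relation.ReflTransGen.tail ?_ ⟨f, hfF, hy⟩
    exact aux_chain_reach hch (fun i hi => (hch.2 i hi).1) 0 (by omega) n (le_refl n)
  obtain ⟨j, hj, hzj⟩ := hcov y hreachy
  subst hzj
  by_cases hj0 : j = 0
  · subst hj0; exact ⟨f, hfF, hy, hfne⟩
  · exfalso
    have hjn : j ≠ n := by
      intro hq
      subst hq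
      exact G.loopless f (by rw [hy]; exact Sym2.mk_isDiag_iff.mpr rfl)
    have hjlt : j < n := by omega
    -- three distinct F-edges at z j
    have h2 := hch.2 (j-1) (by omega)
    have e2 : j - 1 + 1 = j := by omega
    rw [e2] at h2
    have h3 := hch.2 j hjlt
    have hne1 : e (j-1) ≠ e j := by
      apply aux_ne_of_inc
      rw [h2.2, h3.2]
      intro hq
      rcases Sym2.eq_iff.mp hq with ⟨ha, hb⟩ | ⟨ha, hb⟩
      · have := hch.1 (j-1) (by omega) j (by omega) ha; omega
      · have := hch.1 (j-1) (by omega) (j+1) (by omega) ha; omega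
    have hne2 : e (j-1) ≠ f := by
      apply aux_ne_of_inc
      rw [h2.2, hy]
      intro hq
      rcases Sym2.eq_iff.mp hq with ⟨ha, hb⟩ | ⟨ha, hb⟩
      · have := hch.1 (j-1) (by omega) n (le_refl n) ha; omega
      · have := hch.1 j (by omega) n (le_refl n) hb; omega
    have hne3 : e j ≠ f := by
      by_cases hjn1 : j + 1 = n
      · rw [show j = n - 1 by omega]; exact Ne.symm hfne
      · apply aux_ne_of_inc
        rw [h3.2, hy]
        intro hq
        rcases Sym2.eq_iff.mp hq with ⟨ha, hb⟩ | ⟨ha, hb⟩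
        · have := hch.1 j (by omega) n (le_refl n) ha; omega
        · have := hch.1 (j+1) (by omega) n (le_refl n) hb; omega
    have hdj : 3 ≤ G.degOn F (z j) :=
      aux_three_le_degOn h2.1 h3.1 hfF (aux_mem_right h2.2) (aux_mem_left h3.2)
        (aux_mem_right hy) hne1 hne2 hne3
    have := hdeg (z j)
    omega

lemma aux_rot_index {n r j : ℕ} (hr : r ≤ n) (hj : j ≤ n) :
    ∃ i, i ≤ n ∧ (i + r) % (n+1) = j := by
  by_cases h : r ≤ j
  · exact ⟨j - r, by omega, by
      rw [show j - r + r = j by omega]; exact Nat.mod_eq_of_lt (by omega)⟩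
  · refine ⟨j + (n+1) - r, by omega, ?_⟩
    rw [show j + (n+1) - r + r = j + (n+1) by omega, Nat.add_mod_right]
    exact Nat.mod_eq_of_lt (by omega)

/-- Rotate a chain that closes into a cycle. -/
lemma aux_chain_rotate {F : Set E} {n : ℕ} {z : ℕ → V} {e : ℕ → E} {f : E} {r : ℕ}
    (hch : G.AuxChain F n z e) (hf : f ∈ F) (hfinc : G.inc f = s(z n, z 0))
    (hn : 2 ≤ n) (hr : r ≤ n) :
    G.AuxChain F n (fun i => z ((i + r) % (n+1)))
      (fun i => if (i + r) % (n+1) = n then f else e ((i + r) % (n+1))) := by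
  have hmod : ∀ i : ℕ, (i + r) % (n+1) ≤ n := fun i => by
    have := Nat.mod_lt (i + r) (show 0 < n+1 by omega); omega
  have hmod2 : ∀ i, i ≤ n + 1 → (i + r) % (n+1) =
      if i + r ≤ n then i + r else i + r - (n+1) := by
    intro i hi
    split
    · exact Nat.mod_eq_of_lt (by omega)
    · rw [Nat.mod_eq_sub_mod (by omega)]
      exact Nat.mod_eq_of_lt (by omega)
  constructor
  · intro i hi j hj hz
    have h := hch.1 _ (hmod i) _ (hmod j) hz
    have hk := hmod2 i (by omega)
    have hk1 := hmod2 j (by omega)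
    split at hk <;> split at hk1 <;> omega
  · intro i hi
    by_cases hkn : (i + r) % (n+1) = n
    · have h0 : (i + 1 + r) % (n+1) = 0 := by
        have hk := hmod2 i (by omega)
        have hk1 := hmod2 (i+1) (by omega)
        rw [hk] at hkn
        split at hk1 <;> split at hkn <;> omega
      simp only [if_pos hkn, hkn, h0]
      exact ⟨hf, hfinc⟩
    · have hklt : (i + r) % (n+1) < n := lt_of_le_of_ne (hmod i) hkn
      have h1 : (i + 1 + r) % (n+1) = (i + r) % (n+1) + 1 := by
        have hk := hmod2 i (by omega)
        have hk1 := hmod2 (i+1) (by omega)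
        split at hk <;> split at hk1 <;> omega
      simp only [if_neg hkn, h1]
      exact hch.2 _ hklt

end Multigraph

namespace Multigraph

variable {V E : Type} {G : Multigraph V E}

/-- A maximal covering chain through `v` can be arranged so that each endpoint is
either `v` itself, or has `F`-degree at most 1, or receives colour `false` in the
alternating colouring that gives `v` colour `true`. -/
lemma aux_exists_good_chain [Fintype V] [Fintype E] [Nonempty E] {F : Set E}
    (hdeg : ∀ x : V, G.degOn F x ≤ 2) (v : V) :
    ∃ n z e p, G.AuxChain F n z e ∧ p ≤ n ∧ z p = v ∧
      (∀ x : V, G.ReachOn F v x → ∃ i, i ≤ n ∧ z i = x) ∧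
      (p = 0 ∨ G.degOn F (z 0) ≤ 1 ∨ p % 2 = 1) ∧
      (p = n ∨ G.degOn F (z n) ≤ 1 ∨ (n + p) % 2 = 1) := by
  obtain ⟨n, z0, e0, p0, hch0, hp0, hzp0, hcov0⟩ := aux_exists_max_chain hdeg v
  have fix : ∀ (z : ℕ → V) (e : ℕ → E) (p : ℕ), G.AuxChain F n z e → p ≤ n → z p = v →
      (∀ x : V, G.ReachOn F v x → ∃ i, i ≤ n ∧ z i = x) →
      p ≠ n → 2 ≤ G.degOn F (z n) → (n + p) % 2 = 0 →
      ∃ z' e' p', G.AuxChain F n z' e' ∧ p' ≤ n ∧ z' p' = v ∧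
        (∀ x : V, G.ReachOn F v x → ∃ i, i ≤ n ∧ z' i = x) ∧
        (p' = 0 ∨ p' % 2 = 1) ∧ (n + p') % 2 = 1 := by
    intro z e p hch hp hzp hcov hpn hd2 hpar
    have hn2 : 2 ≤ n := by by_contra h; omega
    have hcovz0 : ∀ x : V, G.ReachOn F (z 0) x → ∃ i, i ≤ n ∧ z i = x := by
      intro x hx
      refine hcov x (aux_reach_trans ?_ hx)
      have := aux_chain_reach hch (fun i hi => (hch.2 i hi).1) p hp 0 (by omega)
      rwa [hzp] at this
    obtain ⟨f, hfF, hfinc, -⟩ := aux_cycle_edge hdeg hch hcovz0 (by omega) hd2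
    by_cases hnodd : n % 2 = 1
    · -- even cycle: rotate so that v is the left endpoint
      refine ⟨_, _, 0, aux_chain_rotate hch hfF hfinc hn2 hp, by omega, ?_, ?_, Or.inl rfl, by omega⟩
      · show z ((0 + p) % (n+1)) = v
        rw [Nat.zero_add, Nat.mod_eq_of_lt (by omega)]
        exact hzp
      · intro x hx
        obtain ⟨j, hj, hzj⟩ := hcov x hx
        obtain ⟨i, hi, hij⟩ := aux_rot_index hp hj
        exact ⟨i, hi, by simp only [hij]; exact hzj⟩
    · -- odd cycle: rotate so that v sits at position 1
      set r : ℕ := if p = 0 then n else p - 1 with hr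
      have hrn : r ≤ n := by rw [hr]; split <;> omega
      refine ⟨_, _, 1, aux_chain_rotate hch hfF hfinc hn2 hrn, by omega, ?_, ?_, Or.inr rfl, by omega⟩
      · show z ((1 + r) % (n+1)) = v
        rw [hr]
        by_cases hp0' : p = 0
        · rw [if_pos hp0', show (1 + n) % (n + 1) = 0 by rw [Nat.add_comm]; exact Nat.mod_self (n+1)]
          rw [← hp0']; exact hzp
        · rw [if_neg hp0', show (1 + (p - 1)) % (n + 1) = p by
            rw [show 1 + (p - 1) = p by omega]; exact Nat.mod_eq_of_lt (by omega)]
          exact hzp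
      · intro x hx
        obtain ⟨j, hj, hzj⟩ := hcov x hx
        obtain ⟨i, hi, hij⟩ := aux_rot_index hrn hj
        exact ⟨i, hi, by simp only [hij]; exact hzj⟩
  by_cases hbadR : p0 = n ∨ G.degOn F (z0 n) ≤ 1 ∨ (n + p0) % 2 = 1
  · by_cases hbadL : p0 = 0 ∨ G.degOn F (z0 0) ≤ 1 ∨ p0 % 2 = 1
    · exact ⟨n, z0, e0, p0, hch0, hp0, hzp0, hcov0, hbadL, hbadR⟩
    · -- left end bad: reverse, then fix the (now bad) right end
      push_neg at hbadL
      obtain ⟨hL1, hL2, hL3⟩ := hbadL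
      have hrev := aux_chain_rev hch0
      have hcovrev : ∀ x : V, G.ReachOn F v x → ∃ i, i ≤ n ∧ z0 (n - i) = x := by
        intro x hx
        obtain ⟨j, hj, hzj⟩ := hcov0 x hx
        exact ⟨n - j, by omega, by rw [show n - (n - j) = j by omega]; exact hzj⟩
      obtain ⟨z', e', p', hch', hp', hzp', hcov', hecL, hecR⟩ :=
        fix _ _ (n - p0) hrev (by omega)
          (by show z0 (n - (n - p0)) = v; rw [show n - (n - p0) = p0 by omega]; exact hzp0)
          hcovrev (by omega)
          (by show 2 ≤ G.degOn F (z0 (n - n)); rw [Nat.sub_self]; omega)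
          (by omega)
      exact ⟨n, z', e', p', hch', hp', hzp', hcov', by tauto, by tauto⟩
  · -- right end bad: fix it
    push_neg at hbadR
    obtain ⟨hR1, hR2, hR3⟩ := hbadR
    obtain ⟨z', e', p', hch', hp', hzp', hcov', hecL, hecR⟩ :=
      fix _ _ p0 hch0 hp0 hzp0 hcov0 hR1 (by omega) (by omega)
    exact ⟨n, z', e', p', hch', hp', hzp', hcov', by tauto, by tauto⟩

end Multigraph

namespace Multigraph

variable {V E : Type} {G : Multigraph V E}

/-- The `F`-component of `v` (a path or cycle) carries a spanning tree together with a
proper 2-colouring giving `v` colour `true`, in which every leaf other than `v` either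
has `F`-degree at most 1 or is coloured `false`. -/
lemma aux_spine [Fintype V] [Fintype E] {F : Set E}
    (hdeg : ∀ x : V, G.degOn F x ≤ 2) (v : V) :
    ∃ (S₂ : Set E) (c₂ : V → Bool),
      S₂ ⊆ F ∧
      G.IsTree {x | G.ReachOn F v x} S₂ ∧
      G.ProperOn S₂ c₂ ∧ c₂ v = true ∧
      (∀ x : V, G.ReachOn F v x → G.degOn S₂ x ≤ 1 → x ≠ v →
        G.degOn F x ≤ 1 ∨ c₂ x = false) ∧
      (G.degOn S₂ v = 0 → G.degOn F v = 0) := by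
  classical
  rcases isEmpty_or_nonempty E with hE | hE
  · -- no edges at all
    have hcl : ∀ x : V, G.ReachOn F v x → x = v := by
      intro x hx
      induction hx with
      | refl => rfl
      | tail h1 h2 ih => obtain ⟨g, -, -⟩ := h2; exact (IsEmpty.false g).elim
    have hset : {x | G.ReachOn F v x} = {v} := by
      ext x
      simp only [Set.mem_setOf_eq, Set.mem_singleton_iff]
      exact ⟨hcl x, fun hx => by subst hx; exact Relation.ReflTransGen.refl⟩
    refine ⟨∅, fun _ => true, by simp, ?_, ?_, rfl, ?_, ?_⟩
    · refine ⟨⟨v, Relation.ReflTransGen.refl⟩, fun g hg => (IsEmpty.false g).elim, ?_, ?_⟩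
      · intro a ha b hb
        have ha' : a = v := hcl a ha
        have hb' : b = v := hcl b hb
        rw [ha', hb']
        exact Relation.ReflTransGen.refl
      · rw [hset]; simp
    · intro g hg; exact (IsEmpty.false g).elim
    · intro x hx hd hxv; exact absurd (hcl x hx) hxv
    · intro _
      have hemp : {g ∈ F | v ∈ G.inc g} = ∅ := Set.eq_empty_of_isEmpty _
      unfold degOn
      rw [hemp, Set.ncard_empty]
  -- main case
  obtain ⟨n, z, e, p, hch, hp, hzp, hcov, hecL, hecR⟩ := aux_exists_good_chain hdeg v
  set S₂ : Set E := e '' {i | i < n} with hS₂def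
  set c₂ : V → Bool :=
    fun x => if ∃ i, i ≤ n ∧ z i = x ∧ i % 2 = p % 2 then true else false with hc₂def
  have hS : ∀ i, i < n → e i ∈ S₂ := fun i hi => ⟨i, hi, rfl⟩
  set img : Set V := z '' {i | i ≤ n} with himgdef
  have himgmem : ∀ i, i ≤ n → z i ∈ img := fun i hi => ⟨i, hi, rfl⟩
  have himg : {x | G.ReachOn F v x} = img := by
    ext x
    constructor
    · intro hx
      obtain ⟨i, hi, hzi⟩ := hcov x hx
      exact ⟨i, hi, hzi⟩
    · rintro ⟨i, hi, rfl⟩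
      have hi' : i ≤ n := hi
      have := aux_chain_reach hch (fun i hi => (hch.2 i hi).1) p hp i hi'
      rwa [hzp] at this
  have hc2 : ∀ j, j ≤ n → (c₂ (z j) = true ↔ j % 2 = p % 2) := by
    intro j hj
    by_cases hx : ∃ i, i ≤ n ∧ z i = z j ∧ i % 2 = p % 2
    · have hc : c₂ (z j) = true := by
        show (if ∃ i, i ≤ n ∧ z i = z j ∧ i % 2 = p % 2 then true else false) = true
        rw [if_pos hx]
      obtain ⟨i, hi, hiz, hip⟩ := hx
      have hij : i = j := hch.1 i hi j hj hiz
      subst hij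
      simp [hc, hip]
    · have hc : c₂ (z j) = false := by
        show (if ∃ i, i ≤ n ∧ z i = z j ∧ i % 2 = p % 2 then true else false) = false
        rw [if_neg hx]
      rw [hc]
      simp only [Bool.false_eq_true, false_iff]
      exact fun hjp => hx ⟨j, hj, rfl, hjp⟩
  have hS₂F : S₂ ⊆ F := by
    rintro g ⟨i, hi, rfl⟩
    exact (hch.2 i hi).1
  have hproper : G.ProperOn S₂ c₂ := by
    rintro g ⟨i, hi, rfl⟩ a b hab
    have hi' : i < n := hi
    have hinc := (hch.2 i hi').2
    rw [hab] at hinc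
    have key : c₂ (z i) ≠ c₂ (z (i+1)) := by
      intro heq
      have t1 := hc2 i (by omega)
      have t2 := hc2 (i+1) (by omega)
      cases hq : c₂ (z i) with
      | true =>
        have a1 := t1.mp hq
        have a2 := t2.mp (by rw [← heq]; exact hq)
        omega
      | false =>
        have a1 : ¬ i % 2 = p % 2 := fun h => absurd (t1.mpr h) (by rw [hq]; simp)
        have a2 : ¬ (i+1) % 2 = p % 2 := fun h =>
          absurd (t2.mpr h) (by rw [← heq, hq]; simp)
        omega
    rcases Sym2.eq_iff.mp hinc with ⟨ha, hb⟩ | ⟨ha, hb⟩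
    · rw [ha, hb]; exact key
    · rw [ha, hb]; exact key.symm
  have hcv : c₂ v = true := by rw [← hzp]; exact (hc2 p hp).mpr rfl
  have hdeg2 : ∀ j, 0 < j → j < n → 2 ≤ G.degOn S₂ (z j) := by
    intro j hj0 hjn
    have h2 := hch.2 (j-1) (by omega)
    have e2 : j - 1 + 1 = j := by omega
    rw [e2] at h2
    have h3 := hch.2 j hjn
    have hne1 : e (j-1) ≠ e j := by
      apply aux_ne_of_inc
      rw [h2.2, h3.2]
      intro hq
      rcases Sym2.eq_iff.mp hq with ⟨ha, hb⟩ | ⟨ha, hb⟩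
      · have := hch.1 (j-1) (by omega) j (by omega) ha; omega
      · have := hch.1 (j-1) (by omega) (j+1) (by omega) ha; omega
    exact aux_two_le_degOn (hS _ (by omega)) (hS _ hjn)
      (aux_mem_right h2.2) (aux_mem_left h3.2) hne1
  refine ⟨S₂, c₂, hS₂F, ?_, hproper, hcv, ?_, ?_⟩
  · -- IsTree
    refine ⟨⟨v, Relation.ReflTransGen.refl⟩, ?_, ?_, ?_⟩
    · rintro g ⟨i, hi, rfl⟩ x hx
      have hi' : i < n := hi
      rw [(hch.2 i hi').2, Sym2.mem_iff] at hx
      have hgoal : x ∈ img := by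
        rcases hx with rfl | rfl
        · exact himgmem i (by omega)
        · exact himgmem (i+1) (by omega)
      rw [himg]
      exact hgoal
    · intro a ha b hb
      have ha' : a ∈ img := by rw [← himg]; exact ha
      have hb' : b ∈ img := by rw [← himg]; exact hb
      obtain ⟨i, hi, rfl⟩ := ha'
      obtain ⟨j, hj, rfl⟩ := hb'
      exact aux_chain_reach hch hS i hi j hj
    · rw [himg]
      have hinjz : Set.InjOn z {i | i ≤ n} := fun i hi j hj hij => hch.1 i hi j hj hij
      have hinje : Set.InjOn e {i | i < n} := by
        intro i hi j hj hij
        have hi' : i < n := hi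
        have hj' : j < n := hj
        have h1 := (hch.2 i hi').2
        have h2 := (hch.2 j hj').2
        rw [hij, h2] at h1
        rcases Sym2.eq_iff.mp h1 with ⟨ha, hb⟩ | ⟨ha, hb⟩
        · exact (hch.1 j (by omega) i (by omega) ha).symm
        · have q1 := hch.1 j (by omega) (i+1) (by omega) ha
          have q2 := hch.1 (j+1) (by omega) i (by omega) hb
          omega
      rw [Set.ncard_image_of_injOn hinjz, Set.ncard_image_of_injOn hinje]
      rw [show {i | i < n} = ↑(Finset.range n) by ext; simp,
        show {i | i ≤ n} = ↑(Finset.range (n+1)) by ext; simp [Nat.lt_succ_iff]]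
      rw [Set.ncard_coe_finset, Set.ncard_coe_finset, Finset.card_range, Finset.card_range]
  · -- leaf condition
    intro x hx hle hxv
    obtain ⟨j, hj, rfl⟩ := hcov x hx
    have hj0n : j = 0 ∨ j = n := by
      by_contra hcon
      push_neg at hcon
      have := hdeg2 j (by omega) (by omega)
      omega
    have hfalse : ¬ (j % 2 = p % 2) → c₂ (z j) = false := by
      intro hne
      have := hc2 j hj
      cases hq : c₂ (z j)
      · rfl
      · exact absurd (this.mp hq) hne
    rcases hj0n with rfl | hqn
    · rcases hecL with hq | hq | hq
      · exact absurd (by rw [← hq]; exact hzp : z 0 = v) hxv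
      · exact Or.inl hq
      · exact Or.inr (hfalse (by omega))
    · rcases hecR with hq | hq | hq
      · exact absurd (by rw [hqn, ← hq]; exact hzp : z j = v) hxv
      · exact Or.inl (by rw [hqn]; exact hq)
      · exact Or.inr (hfalse (by omega))
  · -- if v is isolated in the tree then its component is trivial
    intro h0
    by_cases hn0 : n = 0
    · subst hn0
      have hvz : z 0 = v := by rw [show p = 0 by omega] at hzp; exact hzp
      have hemp : {g ∈ F | v ∈ G.inc g} = ∅ := by
        rw [Set.eq_empty_iff_forall_notMem]
        rintro g ⟨hgF, hgv⟩
        obtain ⟨y, hy⟩ := Sym2.mem_iff_exists.mp hgv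
        have hry : G.ReachOn F v y :=
          Relation.ReflTransGen.tail Relation.ReflTransGen.refl ⟨g, hgF, hy⟩
        obtain ⟨i, hi, hzi⟩ := hcov y hry
        rw [show i = 0 by omega, hvz] at hzi
        exact G.loopless g (by rw [hy, ← hzi]; exact Sym2.mk_isDiag_iff.mpr rfl)
      unfold degOn
      rw [hemp, Set.ncard_empty]
    · exfalso
      by_cases hpn : p < n
      · have hmemv : v ∈ G.inc (e p) := by
          rw [← hzp]; exact aux_mem_left (hch.2 p hpn).2
        have h1 := aux_one_le_degOn (G := G) (hS p hpn) hmemv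
        omega
      · have hpe : p = n := by omega
        have h2 := hch.2 (n-1) (by omega)
        have e2 : n - 1 + 1 = n := by omega
        rw [e2] at h2
        have hmemv : v ∈ G.inc (e (n-1)) := by
          rw [← hzp, hpe]; exact aux_mem_right h2.2
        have h1 := aux_one_le_degOn (G := G) (hS (n-1) (by omega)) hmemv
        omega

end Multigraph

/-- Let `G` be a 2-edge-connected non-regular multigraph, `F`
a weak 2-factor of `G`, `w ∈ V(G)` and `lam ∈ {0,1}` (with `false` for type 0
and `true` for type 1). Let `T` (vertex set `U`, edge set `S`) be a good weakly
even `(w, lam)`-tree of maximum order, with `(w, lam)`-bipartition given by the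
proper 2-colouring `c` (so `X₀ = {v ∈ U | c v = false}` and
`Y₀ = {v ∈ U | c v = true}`), and suppose `U ≠ V(G)`. Then no edge of `G` joins
a vertex of `X₀` to a vertex outside `U`, and some edge of `G` joins a vertex
of `Y₀` to a vertex outside `U`. -/
theorem edges_leaving_maximum_good_tree {V E : Type} [Fintype V] [Fintype E]
    (G : Multigraph V E) (h2ec : G.TwoEdgeConnected) (hnreg : ¬ G.IsRegular)
    (F : Set E) (hF : G.IsWeakTwoFactor F) (w : V) (lam : Bool)
    (U : Set V) (S : Set E) (c : V → Bool)
    (hwU : w ∈ U) (htree : G.IsTree U S)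
    (hgood : ∀ u ∈ U, ∀ v : V, G.ReachOn F u v → v ∈ U)
    (hc : G.ProperOn S c) (hcw : c w = lam)
    (hwe : ∀ v : V, G.IsLeaf S v → G.degree v = G.maxDegree → c v = false)
    (hmax : ∀ (U' : Set V) (S' : Set E) (c' : V → Bool),
      w ∈ U' → G.IsTree U' S' →
      (∀ u ∈ U', ∀ v : V, G.ReachOn F u v → v ∈ U') →
      G.ProperOn S' c' → c' w = lam →
      (∀ v : V, G.IsLeaf S' v → G.degree v = G.maxDegree → c' v = false) →
      U'.ncard ≤ U.ncard)
    (hne : U ≠ Set.univ) :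
    (¬ ∃ (e : E) (u v : V), G.inc e = s(u, v) ∧ u ∈ U ∧ c u = false ∧ v ∉ U) ∧
    (∃ (e : E) (u v : V), G.inc e = s(u, v) ∧ u ∈ U ∧ c u = true ∧ v ∉ U) := by
  classical
  open Multigraph in
  have hdegF : ∀ x : V, G.degOn F x ≤ 2 := fun x => (hF x).1
  have partA : ¬ ∃ (e : E) (u v : V), G.inc e = s(u, v) ∧ u ∈ U ∧ c u = false ∧ v ∉ U := by
    rintro ⟨e₀, u, v, hinc, huU, hcu, hvU⟩
    obtain ⟨S₂, c₂, hS₂F, htree₂, hprop₂, hc₂v, hleaf₂, hv₂⟩ := Multigraph.aux_spine hdegF v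
    set U₂ : Set V := {x | G.ReachOn F v x} with hU₂def
    have hvU₂ : v ∈ U₂ := Relation.ReflTransGen.refl
    have hdisj : Disjoint U U₂ := by
      rw [Set.disjoint_left]
      intro x hxU hxU₂
      exact hvU (hgood x hxU v (Multigraph.aux_reach_symm hxU₂))
    have hedges₂ : ∀ g ∈ S₂, ∀ y : V, y ∈ G.inc g → y ∈ U₂ := htree₂.edges_in
    have he₀S : e₀ ∉ S := fun h => hvU (htree.edges_in e₀ h v (Multigraph.aux_mem_right hinc))
    have he₀S₂ : e₀ ∉ S₂ := fun h =>
      Set.disjoint_left.mp hdisj huU (hedges₂ e₀ h u (Multigraph.aux_mem_left hinc))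
    have hdisjS : Disjoint S ({e₀} ∪ S₂) := by
      rw [Set.disjoint_left]
      rintro g hgS (rfl | hgS₂)
      · exact he₀S hgS
      · have hmem := Sym2.out_fst_mem (G.inc g)
        exact Set.disjoint_left.mp hdisj (htree.edges_in g hgS _ hmem) (hedges₂ g hgS₂ _ hmem)
    have hdisj1 : Disjoint ({e₀} : Set E) S₂ := by
      rw [Set.disjoint_left]
      rintro g rfl hg
      exact he₀S₂ hg
    set S' : Set E := S ∪ ({e₀} ∪ S₂) with hS'def
    set U' : Set V := U ∪ U₂ with hU'def
    set c' : V → Bool := fun x => if x ∈ U then c x else c₂ x with hc'def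
    have hSsub : S ⊆ S' := Set.subset_union_left
    have he₀sub : e₀ ∈ S' := Or.inr (Or.inl rfl)
    have hS₂sub : S₂ ⊆ S' := fun g hg => Or.inr (Or.inr hg)
    -- c' values
    have hc'U : ∀ x ∈ U, c' x = c x := fun x hx => by
      show (if x ∈ U then c x else c₂ x) = c x; rw [if_pos hx]
    have hc'U₂ : ∀ x ∈ U₂, c' x = c₂ x := fun x hx => by
      show (if x ∈ U then c x else c₂ x) = c₂ x
      rw [if_neg (fun h => Set.disjoint_left.mp hdisj h hx)]
    -- the combined tree
    have htree' : G.IsTree U' S' := by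
      refine ⟨⟨w, Or.inl hwU⟩, ?_, ?_, ?_⟩
      · rintro g (hgS | rfl | hgS₂) y hy
        · exact Or.inl (htree.edges_in g hgS y hy)
        · rw [hinc, Sym2.mem_iff] at hy
          rcases hy with rfl | rfl
          · exact Or.inl huU
          · exact Or.inr hvU₂
        · exact Or.inr (hedges₂ g hgS₂ y hy)
      · have hbr : G.ReachOn S' u v := Relation.ReflTransGen.single ⟨e₀, he₀sub, hinc⟩
        have hto : ∀ a ∈ U', G.ReachOn S' a u := by
          rintro a (haU | haU₂)
          · exact Multigraph.aux_reach_mono hSsub (htree.conn a haU u huU)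
          · exact Multigraph.aux_reach_trans
              (Multigraph.aux_reach_mono hS₂sub (htree₂.conn a haU₂ v hvU₂))
              (Multigraph.aux_reach_symm hbr)
        intro a ha b hb
        exact Multigraph.aux_reach_trans (hto a ha) (Multigraph.aux_reach_symm (hto b hb))
      · have h1 : S'.ncard = S.ncard + (1 + S₂.ncard) := by
          rw [hS'def, Set.ncard_union_eq hdisjS (Set.toFinite _) (Set.toFinite _),
            Set.ncard_union_eq hdisj1 (Set.toFinite _) (Set.toFinite _), Set.ncard_singleton]
        have h2 : U'.ncard = U.ncard + U₂.ncard := by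
          rw [hU'def, Set.ncard_union_eq hdisj (Set.toFinite _) (Set.toFinite _)]
        have h3 := htree.card_eq
        have h4 := htree₂.card_eq
        omega
    -- properness of c'
    have hprop' : G.ProperOn S' c' := by
      rintro g (hgS | rfl | hgS₂) a b hab
      · rw [hc'U a (htree.edges_in g hgS a (Multigraph.aux_mem_left hab)),
          hc'U b (htree.edges_in g hgS b (Multigraph.aux_mem_right hab))]
        exact hc g hgS a b hab
      · rw [hinc] at hab
        have hval : c' u ≠ c' v := by
          rw [hc'U u huU, hc'U₂ v hvU₂, hcu, hc₂v]
          simp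
        rcases Sym2.eq_iff.mp hab with ⟨ha, hb⟩ | ⟨ha, hb⟩
        · rw [← ha, ← hb]; exact hval
        · rw [← ha, ← hb]; exact hval.symm
      · rw [hc'U₂ a (hedges₂ g hgS₂ a (Multigraph.aux_mem_left hab)),
          hc'U₂ b (hedges₂ g hgS₂ b (Multigraph.aux_mem_right hab))]
        exact hprop₂ g hgS₂ a b hab
    -- degree-zero helper
    have hdZero : ∀ (T : Set E) (W : Set V), (∀ g ∈ T, ∀ y : V, y ∈ G.inc g → y ∈ W) →
        ∀ x ∉ W, G.degOn T x = 0 := by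
      intro T W hT x hx
      unfold Multigraph.degOn
      rw [show {g ∈ T | x ∈ G.inc g} = ∅ by
        rw [Set.eq_empty_iff_forall_notMem]
        rintro g ⟨hg, hxg⟩
        exact hx (hT g hg x hxg)]
      exact Set.ncard_empty _
    -- weak evenness of c'
    have hwe' : ∀ x : V, G.IsLeaf S' x → G.degree x = G.maxDegree → c' x = false := by
      intro x hLf hdg
      have hsum : G.degOn S' x = G.degOn S x + (G.degOn {e₀} x + G.degOn S₂ x) := by
        rw [hS'def, Multigraph.aux_degOn_union hdisjS, Multigraph.aux_degOn_union hdisj1]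
      have hLf1 : G.degOn S' x = 1 := hLf
      by_cases hxU : x ∈ U
      · by_cases hxu : x = u
        · rw [hc'U x hxU, hxu, hcu]
        · have hd1 : G.degOn {e₀} x = 0 := by
            refine Multigraph.aux_degOn_singleton_neg ?_
            rw [hinc, Sym2.mem_iff]
            rintro (rfl | rfl)
            · exact hxu rfl
            · exact hvU hxU
          have hd2 : G.degOn S₂ x = 0 :=
            hdZero S₂ U₂ hedges₂ x (fun h => Set.disjoint_left.mp hdisj hxU h)
          have hdS : G.degOn S x = 1 := by omega
          rw [hc'U x hxU]
          exact hwe x hdS hdg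
      · -- x is in the new component
        have hxU₂ : x ∈ U₂ := by
          have hpos : 0 < G.degOn S' x := by omega
          rw [Multigraph.degOn] at hpos
          obtain ⟨g, hgS', hxg⟩ := (Set.ncard_pos (Set.toFinite _)).mp hpos
          rcases hgS' with hgS | rfl | hgS₂
          · exact absurd (htree.edges_in g hgS x hxg) hxU
          · rw [hinc, Sym2.mem_iff] at hxg
            rcases hxg with rfl | rfl
            · exact absurd huU hxU
            · exact hvU₂
          · exact hedges₂ g hgS₂ x hxg
        have hdS : G.degOn S x = 0 := hdZero S U htree.edges_in x hxU
        by_cases hxv : x = v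
        · subst hxv
          have hd1 : G.degOn {e₀} x = 1 :=
            Multigraph.aux_degOn_singleton_pos (Multigraph.aux_mem_right hinc)
          have hd2 : G.degOn S₂ x = 0 := by omega
          have hdF := hv₂ hd2
          have := (hF x).2 (by omega)
          omega
        · have hd1 : G.degOn {e₀} x = 0 := by
            refine Multigraph.aux_degOn_singleton_neg ?_
            rw [hinc, Sym2.mem_iff]
            rintro (rfl | rfl)
            · exact hxU huU
            · exact hxv rfl
          have hd2 : G.degOn S₂ x = 1 := by omega
          rcases hleaf₂ x hxU₂ (by omega) hxv with hq | hq
          · have := (hF x).2 (by omega)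
            omega
          · rw [hc'U₂ x hxU₂]
            exact hq
    -- contradiction with maximality
    have hle := hmax U' S' c' (Or.inl hwU) htree' ?_ hprop' ?_ hwe'
    · have h2 : U'.ncard = U.ncard + U₂.ncard := by
        rw [hU'def, Set.ncard_union_eq hdisj (Set.toFinite _) (Set.toFinite _)]
      have hpos : 0 < U₂.ncard := (Set.ncard_pos (Set.toFinite _)).mpr ⟨v, hvU₂⟩
      omega
    · rintro a (haU | haU₂) y hay
      · exact Or.inl (hgood a haU y hay)
      · exact Or.inr (Multigraph.aux_reach_trans haU₂ hay)
    · rw [hc'U w hwU]; exact hcw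
  refine ⟨partA, ?_⟩
  obtain ⟨x0, hx0⟩ : ∃ x0, x0 ∉ U := by
    by_contra h
    push_neg at h
    exact hne (Set.eq_univ_of_forall h)
  have hreach : G.ReachOn Set.univ w x0 := (h2ec.1).2 w x0
  have cross : ∀ b : V, G.ReachOn Set.univ w b → b ∉ U →
      ∃ (e : E) (u' v' : V), G.inc e = s(u', v') ∧ u' ∈ U ∧ v' ∉ U := by
    intro b hab
    induction hab with
    | refl => intro h2; exact absurd hwU h2
    | tail h1 h2 ih =>
      rename_i y x'
      intro hx'
      by_cases hy : y ∈ U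
      · obtain ⟨g, -, hg⟩ := h2
        exact ⟨g, y, x', hg, hy, hx'⟩
      · exact ih hy
  obtain ⟨g, u', v', hg, hu', hv'⟩ := cross x0 hreach hx0
  cases hcu' : c u' with
  | false => exact absurd ⟨g, u', v', hg, hu', hcu', hv'⟩ partA
  | true => exact ⟨g, u', v', hg, hu', hcu', hv'⟩
end
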